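/- Assume the set A of action names is nonempty. Then there is no finite axiom system over CCS that is sound modulo bisimilarity ∼_B and ground-complete modulo bisimilarity ∼_B (Moller's theorem: bisimilarity has no finite ground-complete equational axiomatisation over CCS). -/

import Mathlib

/-- Actions: names, co-names and the silent action τ. -/
inductive Act (A : Type) : Type
  | name : A → Act A
  | coname : A → Act A
  | tau : Act A
  deriving DecidableEq

/-- Complementation of actions (`co` of τ is τ; it is only ever used on non-τ actions). -/
def Act.co {A : Type} : Act A → Act A
  | .name a => .coname a
  | .coname a => .name a
  | .tau => .tau

/-- CCS terms: 0, variables, prefixing, choice and parallel composition. -/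
inductive Tm (A : Type) : Type
  | nil : Tm A
  | var : ℕ → Tm A
  | pre : Act A → Tm A → Tm A
  | plus : Tm A → Tm A → Tm A
  | par : Tm A → Tm A → Tm A

/-- The SOS transition relation of CCS. -/
inductive Step {A : Type} : Tm A → Act A → Tm A → Prop
  | pre (μ : Act A) (t : Tm A) : Step (.pre μ t) μ t
  | plusL {t u t' : Tm A} {μ : Act A} : Step t μ t' → Step (.plus t u) μ t'
  | plusR {t u u' : Tm A} {μ : Act A} : Step u μ u' → Step (.plus t u) μ u'
  | parL {t u t' : Tm A} {μ : Act A} : Step t μ t' → Step (.par t u) μ (.par t' u)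
  | parR {t u u' : Tm A} {μ : Act A} : Step u μ u' → Step (.par t u) μ (.par t u')
  | comm {t u t' u' : Tm A} {α : Act A} : α ≠ Act.tau → Step t α t' → Step u α.co u' →
      Step (.par t u) .tau (.par t' u')

/-- A term is closed (a process) if no variable occurs in it. -/
def Closed {A : Type} : Tm A → Prop
  | .nil => True
  | .var _ => False
  | .pre _ t => Closed t
  | .plus t u => Closed t ∧ Closed u
  | .par t u => Closed t ∧ Closed u

/-- Applying a substitution to a term. -/
def subst {A : Type} (σ : ℕ → Tm A) : Tm A → Tm A
  | .nil => .nil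
  | .var x => σ x
  | .pre μ t => .pre μ (subst σ t)
  | .plus t u => .plus (subst σ t) (subst σ u)
  | .par t u => .par (subst σ t) (subst σ u)

/-- A substitution is closed if all its values are closed. -/
def ClosedSubst {A : Type} (σ : ℕ → Tm A) : Prop := ∀ x, Closed (σ x)

/-- `R` is a bisimulation (symmetric, with the transfer property). -/
def IsBisim {A : Type} (R : Tm A → Tm A → Prop) : Prop :=
  (∀ p q, R p q → R q p) ∧
  (∀ p q μ p', R p q → Step p μ p' → ∃ q', Step q μ q' ∧ R p' q')

/-- Bisimilarity: the largest bisimulation. -/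
def Bisim {A : Type} (p q : Tm A) : Prop := ∃ R, IsBisim R ∧ R p q

/-- Equations are pairs of terms. -/
abbrev Eqn (A : Type) := Tm A × Tm A

/-- Derivability in equational logic from the axiom system `E`. -/
inductive Deriv {A : Type} (E : Set (Eqn A)) : Tm A → Tm A → Prop
  | ax {t u : Tm A} (σ : ℕ → Tm A) (h : (t, u) ∈ E) : Deriv E (subst σ t) (subst σ u)
  | refl (t : Tm A) : Deriv E t t
  | symm {t u : Tm A} (h : Deriv E t u) : Deriv E u t
  | trans {t u v : Tm A} (h₁ : Deriv E t u) (h₂ : Deriv E u v) : Deriv E t v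
  | pre (μ : Act A) {t u : Tm A} (h : Deriv E t u) : Deriv E (.pre μ t) (.pre μ u)
  | plus {t u t' u' : Tm A} (h₁ : Deriv E t u) (h₂ : Deriv E t' u') :
      Deriv E (.plus t t') (.plus u u')
  | par {t u t' u' : Tm A} (h₁ : Deriv E t u) (h₂ : Deriv E t' u') :
      Deriv E (.par t t') (.par u u')

/-- An equation is sound modulo `sim` if all its closed instances are related by `sim`. -/
def EqnSound {A : Type} (sim : Tm A → Tm A → Prop) (t u : Tm A) : Prop :=
  ∀ σ : ℕ → Tm A, ClosedSubst σ → sim (subst σ t) (subst σ u)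

/-- An axiom system is sound modulo `sim` if each of its equations is. -/
def SystemSound {A : Type} (sim : Tm A → Tm A → Prop) (E : Set (Eqn A)) : Prop :=
  ∀ e ∈ E, EqnSound sim e.1 e.2

/-- An axiom system is ground-complete modulo `sim` if it derives every valid
closed equation. -/
def GroundComplete {A : Type} (sim : Tm A → Tm A → Prop) (E : Set (Eqn A)) : Prop :=
  ∀ p q : Tm A, Closed p → Closed q → sim p q → Deriv E p q

/-- `sumF g n` is the sum `g 1 + ⋯ + g n` (empty sum being 0, no padding for `n = 1`). -/
def sumF {A : Type} (g : ℕ → Tm A) : ℕ → Tm A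
  | 0 => .nil
  | 1 => g 1
  | n + 2 => .plus (sumF g (n + 1)) (g (n + 2))


namespace Moller
open Tm Act

variable {A : Type}

/-! ### Step inversion -/

lemma step_nil_inv {μ : Act A} {q : Tm A} (h : Step (.nil : Tm A) μ q) : False := by cases h

lemma step_var_inv {x : ℕ} {μ : Act A} {q : Tm A} (h : Step (.var x : Tm A) μ q) : False := by
  cases h

lemma step_pre_inv {ν μ : Act A} {t q : Tm A} (h : Step (.pre ν t) μ q) : μ = ν ∧ q = t := by
  cases h; exact ⟨rfl, rfl⟩

lemma step_plus_inv {t u q : Tm A} {μ : Act A} (h : Step (.plus t u) μ q) :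
    Step t μ q ∨ Step u μ q := by
  cases h with
  | plusL h => exact Or.inl h
  | plusR h => exact Or.inr h

lemma step_par_inv {t u q : Tm A} {μ : Act A} (h : Step (.par t u) μ q) :
    (∃ t', Step t μ t' ∧ q = .par t' u) ∨ (∃ u', Step u μ u' ∧ q = .par t u') ∨
    (∃ β t' u', β ≠ Act.tau ∧ Step t β t' ∧ Step u β.co u' ∧ μ = Act.tau ∧ q = .par t' u') := by
  cases h with
  | parL h => exact Or.inl ⟨_, h, rfl⟩
  | parR h => exact Or.inr (Or.inl ⟨_, h, rfl⟩)
  | comm hβ h1 h2 => exact Or.inr (Or.inr ⟨_, _, _, hβ, h1, h2, rfl, rfl⟩)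

lemma co_co (μ : Act A) : μ.co.co = μ := by cases μ <;> rfl

lemma co_ne_tau {μ : Act A} (h : μ ≠ Act.tau) : μ.co ≠ Act.tau := by
  cases μ <;> simp [Act.co] at * 

lemma name_ne_co_name (a : A) : (Act.name a : Act A).co ≠ Act.name a := by
  simp [Act.co]

/-! ### Bisimulation toolkit -/

lemma bisim_refl (p : Tm A) : Bisim p p :=
  ⟨fun x y => x = y, ⟨fun _ _ h => h.symm, fun p q μ p' h hs => ⟨p', h ▸ hs, rfl⟩⟩, rfl⟩

lemma bisim_symm {p q : Tm A} (h : Bisim p q) : Bisim q p := by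
  obtain ⟨R, hR, hpq⟩ := h
  exact ⟨R, hR, hR.1 _ _ hpq⟩

lemma bisim_step {p q p' : Tm A} {μ : Act A} (h : Bisim p q) (hs : Step p μ p') :
    ∃ q', Step q μ q' ∧ Bisim p' q' := by
  obtain ⟨R, hR, hpq⟩ := h
  obtain ⟨q', hq', hR'⟩ := hR.2 _ _ _ _ hpq hs
  exact ⟨q', hq', ⟨R, hR, hR'⟩⟩

lemma bisim_step' {p q q' : Tm A} {μ : Act A} (h : Bisim p q) (hs : Step q μ q') :
    ∃ p', Step p μ p' ∧ Bisim p' q' := by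
  obtain ⟨p', h1, h2⟩ := bisim_step (bisim_symm h) hs
  exact ⟨p', h1, bisim_symm h2⟩

lemma bisim_trans {p q r : Tm A} (h1 : Bisim p q) (h2 : Bisim q r) : Bisim p r := by
  refine ⟨fun x z => ∃ y, Bisim x y ∧ Bisim y z, ⟨?_, ?_⟩, q, h1, h2⟩
  · rintro x z ⟨y, hxy, hyz⟩; exact ⟨y, bisim_symm hyz, bisim_symm hxy⟩
  · rintro x z μ x' ⟨y, hxy, hyz⟩ hs
    obtain ⟨y', hy', hxy'⟩ := bisim_step hxy hs
    obtain ⟨z', hz', hyz'⟩ := bisim_step hyz hy'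
    exact ⟨z', hz', y', hxy', hyz'⟩

/-- A handy way to prove bisimilarity: a relation that is a bisimulation up to `Bisim`. -/
lemma bisim_of_rel (R : Tm A → Tm A → Prop)
    (hsym : ∀ p q, R p q → R q p)
    (htrans : ∀ p q μ p', R p q → Step p μ p' → ∃ q', Step q μ q' ∧ (R p' q' ∨ Bisim p' q'))
    {p q : Tm A} (h : R p q) : Bisim p q := by
  refine ⟨fun x y => R x y ∨ Bisim x y, ⟨?_, ?_⟩, Or.inl h⟩
  · rintro x y (h | h)
    · exact Or.inl (hsym _ _ h)
    · exact Or.inr (bisim_symm h)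
  · rintro x y μ x' (h | h) hs
    · exact htrans _ _ _ _ h hs
    · obtain ⟨y', h1, h2⟩ := bisim_step h hs
      exact ⟨y', h1, Or.inr h2⟩

/-- No-step terms. -/
def NoStep (p : Tm A) : Prop := ∀ μ q, ¬ Step p μ q

lemma bisim_of_noStep {p q : Tm A} (hp : NoStep p) (hq : NoStep q) : Bisim p q := by
  refine bisim_of_rel (fun x y => NoStep x ∧ NoStep y) (fun _ _ h => ⟨h.2, h.1⟩) ?_ ⟨hp, hq⟩
  rintro x y μ x' ⟨hx, _⟩ hs
  exact absurd hs (hx _ _)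

lemma noStep_nil : NoStep (.nil : Tm A) := fun _ _ h => step_nil_inv h

lemma noStep_of_bisim {p q : Tm A} (h : Bisim p q) (hp : NoStep p) : NoStep q := by
  intro μ q' hs
  obtain ⟨p', hp', _⟩ := bisim_step' h hs
  exact hp _ _ hp'

/-! ### Congruences -/

lemma bisim_pre {μ : Act A} {p q : Tm A} (h : Bisim p q) : Bisim (.pre μ p) (.pre μ q) := by
  refine bisim_of_rel (fun x y => ∃ p q, Bisim p q ∧ x = .pre μ p ∧ y = .pre μ q)
    ?_ ?_ ⟨p, q, h, rfl, rfl⟩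
  · rintro x y ⟨p, q, h, rfl, rfl⟩; exact ⟨q, p, bisim_symm h, rfl, rfl⟩
  · rintro x y ν x' ⟨p, q, h, rfl, rfl⟩ hs
    obtain ⟨rfl, rfl⟩ := step_pre_inv hs
    exact ⟨q, Step.pre _ _, Or.inr h⟩

lemma bisim_plus {p q p' q' : Tm A} (h1 : Bisim p p') (h2 : Bisim q q') :
    Bisim (.plus p q) (.plus p' q') := by
  refine bisim_of_rel (fun x y => ∃ p q p' q', Bisim p p' ∧ Bisim q q' ∧
      x = .plus p q ∧ y = .plus p' q') ?_ ?_ ⟨p, q, p', q', h1, h2, rfl, rfl⟩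
  · rintro x y ⟨p, q, p', q', h1, h2, rfl, rfl⟩
    exact ⟨p', q', p, q, bisim_symm h1, bisim_symm h2, rfl, rfl⟩
  · rintro x y μ x' ⟨p, q, p', q', h1, h2, rfl, rfl⟩ hs
    rcases step_plus_inv hs with hs | hs
    · obtain ⟨z, hz1, hz2⟩ := bisim_step h1 hs
      exact ⟨z, Step.plusL hz1, Or.inr hz2⟩
    · obtain ⟨z, hz1, hz2⟩ := bisim_step h2 hs
      exact ⟨z, Step.plusR hz1, Or.inr hz2⟩

lemma bisim_par {p q p' q' : Tm A} (h1 : Bisim p p') (h2 : Bisim q q') :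
    Bisim (.par p q) (.par p' q') := by
  refine bisim_of_rel (fun x y => ∃ p q p' q', Bisim p p' ∧ Bisim q q' ∧
      x = .par p q ∧ y = .par p' q') ?_ ?_ ⟨p, q, p', q', h1, h2, rfl, rfl⟩
  · rintro x y ⟨p, q, p', q', h1, h2, rfl, rfl⟩
    exact ⟨p', q', p, q, bisim_symm h1, bisim_symm h2, rfl, rfl⟩
  · rintro x y μ x' ⟨p, q, p', q', h1, h2, rfl, rfl⟩ hs
    rcases step_par_inv hs with ⟨t', ht, rfl⟩ | ⟨u', hu, rfl⟩ | ⟨β, t', u', hβ, ht, hu, rfl, rfl⟩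
    · obtain ⟨z, hz1, hz2⟩ := bisim_step h1 ht
      exact ⟨.par z q', Step.parL hz1, Or.inl ⟨t', q, z, q', hz2, h2, rfl, rfl⟩⟩
    · obtain ⟨z, hz1, hz2⟩ := bisim_step h2 hu
      exact ⟨.par p' z, Step.parR hz1, Or.inl ⟨p, u', p', z, h1, hz2, rfl, rfl⟩⟩
    · obtain ⟨z1, hz1, hz1'⟩ := bisim_step h1 ht
      obtain ⟨z2, hz2, hz2'⟩ := bisim_step h2 hu
      exact ⟨.par z1 z2, Step.comm hβ hz1 hz2, Or.inl ⟨t', u', z1, z2, hz1', hz2', rfl, rfl⟩⟩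

/-- Two-sided version for non-symmetric relations. -/
lemma bisim_of_rel2 (R : Tm A → Tm A → Prop)
    (hl : ∀ p q μ p', R p q → Step p μ p' →
      ∃ q', Step q μ q' ∧ (R p' q' ∨ R q' p' ∨ Bisim p' q'))
    (hr : ∀ p q μ q', R p q → Step q μ q' →
      ∃ p', Step p μ p' ∧ (R p' q' ∨ R q' p' ∨ Bisim p' q'))
    {p q : Tm A} (h : R p q) : Bisim p q := by
  refine bisim_of_rel (fun x y => R x y ∨ R y x) ?_ ?_ (Or.inl h)
  · rintro x y (h | h); exacts [Or.inr h, Or.inl h]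
  · rintro x y μ x' (h | h) hs
    · obtain ⟨q', h1, h2⟩ := hl _ _ _ _ h hs
      refine ⟨q', h1, ?_⟩; rcases h2 with h2 | h2 | h2
      exacts [Or.inl (Or.inl h2), Or.inl (Or.inr h2), Or.inr h2]
    · obtain ⟨q', h1, h2⟩ := hr _ _ _ _ h hs
      refine ⟨q', h1, ?_⟩; rcases h2 with h2 | h2 | h2
      exacts [Or.inl (Or.inr h2), Or.inl (Or.inl h2), Or.inr (bisim_symm h2)]

lemma bisim_par_nil (p : Tm A) : Bisim (.par p .nil) p := by
  refine bisim_of_rel2 (fun x y => x = .par y .nil) ?_ ?_ rfl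
  · rintro x y μ x' rfl hs
    rcases step_par_inv hs with ⟨t', ht, rfl⟩ | ⟨u', hu, _⟩ | ⟨β, t', u', _, _, hu, _, _⟩
    · exact ⟨t', ht, Or.inl rfl⟩
    · exact absurd hu (noStep_nil _ _)
    · exact absurd hu (noStep_nil _ _)
  · rintro x y μ y' rfl hs
    exact ⟨.par y' .nil, Step.parL hs, Or.inl rfl⟩

lemma bisim_par_comm (p q : Tm A) : Bisim (.par p q) (.par q p) := by
  refine bisim_of_rel (fun x y => ∃ p q, x = .par p q ∧ y = .par q p) ?_ ?_ ⟨p, q, rfl, rfl⟩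
  · rintro x y ⟨p, q, rfl, rfl⟩; exact ⟨q, p, rfl, rfl⟩
  · rintro x y μ x' ⟨p, q, rfl, rfl⟩ hs
    rcases step_par_inv hs with ⟨t', ht, rfl⟩ | ⟨u', hu, rfl⟩ | ⟨β, t', u', hβ, ht, hu, rfl, rfl⟩
    · exact ⟨.par q t', Step.parR ht, Or.inl ⟨t', q, rfl, rfl⟩⟩
    · exact ⟨.par u' p, Step.parL hu, Or.inl ⟨p, u', rfl, rfl⟩⟩
    · refine ⟨.par u' t', ?_, Or.inl ⟨t', u', rfl, rfl⟩⟩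
      have := Step.comm (co_ne_tau hβ) hu (by rw [co_co]; exact ht)
      exact this

lemma bisim_par_assoc (p q r : Tm A) : Bisim (.par (.par p q) r) (.par p (.par q r)) := by
  refine bisim_of_rel2 (fun x y => ∃ p q r, x = .par (.par p q) r ∧ y = .par p (.par q r))
    ?_ ?_ ⟨p, q, r, rfl, rfl⟩
  · rintro x y μ x' ⟨p, q, r, rfl, rfl⟩ hs
    rcases step_par_inv hs with ⟨t', ht, rfl⟩ | ⟨u', hu, rfl⟩ | ⟨β, t', u', hβ, ht, hu, rfl, rfl⟩
    · rcases step_par_inv ht with ⟨a', ha, rfl⟩ | ⟨b', hb, rfl⟩ | ⟨γ, a', b', hγ, ha, hb, rfl, rfl⟩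
      · exact ⟨.par a' (.par q r), Step.parL ha, Or.inl ⟨_, _, _, rfl, rfl⟩⟩
      · exact ⟨.par p (.par b' r), Step.parR (Step.parL hb), Or.inl ⟨_, _, _, rfl, rfl⟩⟩
      · exact ⟨.par a' (.par b' r), Step.comm hγ ha (Step.parL hb), Or.inl ⟨_, _, _, rfl, rfl⟩⟩
    · exact ⟨.par p (.par q u'), Step.parR (Step.parR hu), Or.inl ⟨_, _, _, rfl, rfl⟩⟩
    · rcases step_par_inv ht with ⟨a', ha, rfl⟩ | ⟨b', hb, rfl⟩ | ⟨γ, a', b', hγ, ha, hb, rfl, rfl⟩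
      · exact ⟨.par a' (.par q u'), Step.comm hβ ha (Step.parR hu), Or.inl ⟨_, _, _, rfl, rfl⟩⟩
      · exact ⟨.par p (.par b' u'), Step.parR (Step.comm hβ hb hu), Or.inl ⟨_, _, _, rfl, rfl⟩⟩
      · exact absurd rfl hβ
  · rintro x y μ y' ⟨p, q, r, rfl, rfl⟩ hs
    rcases step_par_inv hs with ⟨t', ht, rfl⟩ | ⟨u', hu, rfl⟩ | ⟨β, t', u', hβ, ht, hu, rfl, rfl⟩
    · exact ⟨.par (.par t' q) r, Step.parL (Step.parL ht), Or.inl ⟨_, _, _, rfl, rfl⟩⟩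
    · rcases step_par_inv hu with ⟨a', ha, rfl⟩ | ⟨b', hb, rfl⟩ | ⟨γ, a', b', hγ, ha, hb, rfl, rfl⟩
      · exact ⟨.par (.par p a') r, Step.parL (Step.parR ha), Or.inl ⟨_, _, _, rfl, rfl⟩⟩
      · exact ⟨.par (.par p q) b', Step.parR hb, Or.inl ⟨_, _, _, rfl, rfl⟩⟩
      · exact ⟨.par (.par p a') b', Step.comm hγ (Step.parR ha) hb, Or.inl ⟨_, _, _, rfl, rfl⟩⟩
    · rcases step_par_inv hu with ⟨a', ha, rfl⟩ | ⟨b', hb, rfl⟩ | ⟨γ, a', b', hγ, ha, hb, hco, rfl⟩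
      · exact ⟨.par (.par t' a') r, Step.parL (Step.comm hβ ht ha), Or.inl ⟨_, _, _, rfl, rfl⟩⟩
      · exact ⟨.par (.par t' q) b', Step.comm hβ (Step.parL ht) hb, Or.inl ⟨_, _, _, rfl, rfl⟩⟩
      · exact absurd hco (co_ne_tau hβ)

end Moller

namespace Moller
variable {A : Type}

/-! ### Depth -/

def sdepth : Tm A → ℕ
  | .nil => 0
  | .var _ => 0
  | .pre _ t => sdepth t + 1
  | .plus t u => max (sdepth t) (sdepth u)
  | .par t u => sdepth t + sdepth u

lemma sdepth_step {p q : Tm A} {μ : Act A} (h : Step p μ q) : sdepth q < sdepth p := by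
  induction h with
  | pre => simp [sdepth]
  | plusL h ih => simp [sdepth]; omega
  | plusR h ih => simp [sdepth]; omega
  | parL h ih => simp [sdepth]; omega
  | parR h ih => simp [sdepth]; omega
  | comm hβ h1 h2 ih1 ih2 => simp [sdepth]; omega

lemma sdepth_realize : ∀ p : Tm A, 0 < sdepth p →
    ∃ μ q, Step p μ q ∧ sdepth q + 1 = sdepth p := by
  intro p
  induction p with
  | nil => simp [sdepth]
  | var x => simp [sdepth]
  | pre μ t ih => intro _; exact ⟨μ, t, Step.pre _ _, rfl⟩
  | plus t u iht ihu =>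
    intro h
    rcases le_total (sdepth u) (sdepth t) with hle | hle
    · have ht : 0 < sdepth t := by simp [sdepth] at h; omega
      obtain ⟨μ, q, hs, hq⟩ := iht ht
      exact ⟨μ, q, Step.plusL hs, by simp [sdepth]; omega⟩
    · have hu : 0 < sdepth u := by simp [sdepth] at h; omega
      obtain ⟨μ, q, hs, hq⟩ := ihu hu
      exact ⟨μ, q, Step.plusR hs, by simp [sdepth]; omega⟩
  | par t u iht ihu =>
    intro h
    by_cases ht : 0 < sdepth t
    · obtain ⟨μ, q, hs, hq⟩ := iht ht
      exact ⟨μ, .par q u, Step.parL hs, by simp [sdepth]; omega⟩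
    · have hu : 0 < sdepth u := by simp [sdepth] at h ⊢; omega
      obtain ⟨μ, q, hs, hq⟩ := ihu hu
      exact ⟨μ, .par t q, Step.parR hs, by simp [sdepth]; omega⟩

lemma bisim_sdepth_aux : ∀ k, ∀ p q : Tm A, sdepth p = k → Bisim p q → sdepth q = k := by
  intro k
  induction k using Nat.strong_induction_on with
  | _ k IH =>
    intro p q hp h
    rcases lt_trichotomy (sdepth q) k with hlt | heq | hgt
    · -- realize a step of p of depth k-1
      exfalso
      have hk : 0 < k := Nat.pos_of_ne_zero (by rintro rfl; omega)
      obtain ⟨μ, p', hs, hd⟩ := sdepth_realize p (by omega)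
      obtain ⟨q', hq', hb⟩ := bisim_step h hs
      have h1 : sdepth q' = sdepth p' := (IH (sdepth p') (by omega) p' q' rfl hb)
      have h2 : sdepth q' < sdepth q := sdepth_step hq'
      omega
    · exact heq
    · exfalso
      obtain ⟨μ, q', hs, hd⟩ := sdepth_realize q (by omega)
      obtain ⟨p', hp', hb⟩ := bisim_step' h hs
      have h1 : sdepth q' = sdepth p' := (IH (sdepth p') (by
          have := sdepth_step hp'; omega) p' q' rfl hb)
      have h2 : sdepth p' < k := by have := sdepth_step hp'; omega
      omega

lemma bisim_sdepth {p q : Tm A} (h : Bisim p q) : sdepth p = sdepth q :=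
  (bisim_sdepth_aux (sdepth p) p q rfl h).symm

/-! ### Size and occurrences -/

def tsize : Tm A → ℕ
  | .nil => 1
  | .var _ => 1
  | .pre _ t => tsize t + 1
  | .plus t u => tsize t + tsize u + 1
  | .par t u => tsize t + tsize u + 1

lemma tsize_pos (t : Tm A) : 0 < tsize t := by
  cases t <;> simp [tsize]

def Occurs (y : ℕ) : Tm A → Prop
  | .nil => False
  | .var x => x = y
  | .pre _ t => Occurs y t
  | .plus t u => Occurs y t ∨ Occurs y u
  | .par t u => Occurs y t ∨ Occurs y u

/-! ### Substitution lemmas -/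

lemma subst_agree {σ ρ : ℕ → Tm A} : ∀ {w : Tm A},
    (∀ x, Occurs x w → ρ x = σ x) → subst ρ w = subst σ w := by
  intro w
  induction w with
  | nil => intro _; rfl
  | var x => intro h; exact h x rfl
  | pre μ t ih => intro h; simp [subst]; exact ih h
  | plus t u iht ihu =>
    intro h; simp [subst]
    exact ⟨iht (fun x hx => h x (Or.inl hx)), ihu (fun x hx => h x (Or.inr hx))⟩
  | par t u iht ihu =>
    intro h; simp [subst]
    exact ⟨iht (fun x hx => h x (Or.inl hx)), ihu (fun x hx => h x (Or.inr hx))⟩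

lemma subst_closed {σ : ℕ → Tm A} : ∀ {p : Tm A}, Closed p → subst σ p = p := by
  intro p
  induction p with
  | nil => intro _; rfl
  | var x => intro h; exact absurd h (by simp [Closed])
  | pre μ t ih => intro h; simp [subst]; exact ih h
  | plus t u iht ihu => intro h; simp [subst]; exact ⟨iht h.1, ihu h.2⟩
  | par t u iht ihu => intro h; simp [subst]; exact ⟨iht h.1, ihu h.2⟩

lemma closed_subst {σ : ℕ → Tm A} (hσ : ClosedSubst σ) : ∀ t : Tm A, Closed (subst σ t) := by
  intro t
  induction t with
  | nil => trivial
  | var x => exact hσ x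
  | pre μ t ih => exact ih
  | plus t u iht ihu => exact ⟨iht, ihu⟩
  | par t u iht ihu => exact ⟨iht, ihu⟩

lemma subst_subst (σ σ' : ℕ → Tm A) : ∀ t : Tm A,
    subst σ (subst σ' t) = subst (fun x => subst σ (σ' x)) t := by
  intro t
  induction t with
  | nil => rfl
  | var x => rfl
  | pre μ t ih => simp [subst, ih]
  | plus t u iht ihu => simp [subst, iht, ihu]
  | par t u iht ihu => simp [subst, iht, ihu]

/-! ### Soundness of derivations -/

lemma deriv_sound {E : Set (Eqn A)} (hE : SystemSound Bisim E) {t u : Tm A}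
    (h : Deriv E t u) : ∀ σ, ClosedSubst σ → Bisim (subst σ t) (subst σ u) := by
  induction h with
  | ax σ' he =>
    intro σ hσ
    rw [subst_subst, subst_subst]
    exact hE _ he _ (fun x => closed_subst hσ (σ' x))
  | refl t => intro σ hσ; exact bisim_refl _
  | symm h ih => intro σ hσ; exact bisim_symm (ih σ hσ)
  | trans h1 h2 ih1 ih2 => intro σ hσ; exact bisim_trans (ih1 σ hσ) (ih2 σ hσ)
  | pre μ h ih => intro σ hσ; exact bisim_pre (ih σ hσ)
  | plus h1 h2 ih1 ih2 => intro σ hσ; exact bisim_plus (ih1 σ hσ) (ih2 σ hσ)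
  | par h1 h2 ih1 ih2 => intro σ hσ; exact bisim_par (ih1 σ hσ) (ih2 σ hσ)

end Moller

namespace Moller
variable {A : Type}

/-! ### Chains -/

def ch (a : A) : ℕ → Tm A
  | 0 => .nil
  | k+1 => .pre (Act.name a) (ch a k)

lemma step_ch_inv {a : A} {k : ℕ} {μ : Act A} {d : Tm A} (h : Step (ch a k) μ d) :
    ∃ k', k = k' + 1 ∧ μ = Act.name a ∧ d = ch a k' := by
  cases k with
  | zero => exact absurd h (noStep_nil _ _)
  | succ k' =>
    obtain ⟨h1, h2⟩ := step_pre_inv h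
    exact ⟨k', rfl, h1, h2⟩

lemma step_ch (a : A) (k : ℕ) : Step (ch a (k+1)) (Act.name a) (ch a k) := Step.pre _ _

lemma sdepth_ch (a : A) : ∀ k, sdepth (ch a k) = k := by
  intro k; induction k with
  | zero => rfl
  | succ k ih => simp [ch, sdepth, ih]

lemma closed_ch (a : A) : ∀ k, Closed (ch a k) := by
  intro k; induction k with
  | zero => trivial
  | succ k ih => exact ih

lemma bisim_ch_sdepth {a : A} {p : Tm A} {k : ℕ} (h : Bisim p (ch a k)) : sdepth p = k := by
  have := bisim_sdepth h; rwa [sdepth_ch] at this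

lemma bisim_ch_inj {a : A} {i j : ℕ} (h : Bisim (ch a i) (ch a j)) : i = j := by
  have := bisim_sdepth h; rwa [sdepth_ch, sdepth_ch] at this

lemma bisim_ch_zero {a : A} {p : Tm A} (h : NoStep p) : Bisim p (ch a 0) :=
  bisim_of_noStep h noStep_nil

lemma noStep_of_ch_zero {a : A} {p : Tm A} (h : Bisim p (ch a 0)) : NoStep p := by
  intro μ q hs
  obtain ⟨d, hd, _⟩ := bisim_step h hs
  exact noStep_nil _ _ hd

lemma bisim_ch_step {a : A} {p d : Tm A} {k : ℕ} {μ : Act A} (h : Bisim p (ch a k))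
    (hs : Step p μ d) : ∃ k', k = k' + 1 ∧ μ = Act.name a ∧ Bisim d (ch a k') := by
  obtain ⟨q', hq', hb⟩ := bisim_step h hs
  obtain ⟨k', rfl, rfl, rfl⟩ := step_ch_inv hq'
  exact ⟨k', rfl, rfl, hb⟩

lemma bisim_ch_realize {a : A} {p : Tm A} {k : ℕ} (h : Bisim p (ch a (k+1))) :
    ∃ d, Step p (Act.name a) d ∧ Bisim d (ch a k) := by
  obtain ⟨d, hd, hb⟩ := bisim_step' h (step_ch a k)
  exact ⟨d, hd, hb⟩

lemma bisim_ch_succ {a : A} {p : Tm A} {k : ℕ}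
    (hstep : ∃ μ d, Step p μ d)
    (hall : ∀ μ d, Step p μ d → μ = Act.name a ∧ Bisim d (ch a k)) :
    Bisim p (ch a (k+1)) := by
  refine bisim_of_rel2 (fun x y => x = p ∧ y = ch a (k+1)) ?_ ?_ ⟨rfl, rfl⟩
  · rintro x y μ x' ⟨rfl, rfl⟩ hs
    obtain ⟨rfl, hb⟩ := hall _ _ hs
    exact ⟨ch a k, step_ch a k, Or.inr (Or.inr hb)⟩
  · rintro x y μ y' ⟨rfl, rfl⟩ hs
    obtain ⟨k', hk, rfl, rfl⟩ := step_ch_inv hs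
    obtain ⟨ν, d, hd⟩ := hstep
    obtain ⟨rfl, hb⟩ := hall _ _ hd
    have : k' = k := by omega
    subst this
    exact ⟨d, hd, Or.inr (Or.inr hb)⟩

lemma chain_derivs_bisim {a : A} {p d1 d2 : Tm A} {k : ℕ} {μ1 μ2 : Act A}
    (h : Bisim p (ch a k)) (h1 : Step p μ1 d1) (h2 : Step p μ2 d2) : Bisim d1 d2 := by
  obtain ⟨k1, hk1, _, hb1⟩ := bisim_ch_step h h1
  obtain ⟨k2, hk2, _, hb2⟩ := bisim_ch_step h h2
  have : k1 = k2 := by omega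
  subst this
  exact bisim_trans hb1 (bisim_symm hb2)

lemma bisim_ch_par_add (a : A) (i j : ℕ) :
    Bisim (.par (ch a i) (ch a j)) (ch a (i + j)) := by
  refine bisim_of_rel2 (fun x y => ∃ i j, x = .par (ch a i) (ch a j) ∧ y = ch a (i+j))
    ?_ ?_ ⟨i, j, rfl, rfl⟩
  · rintro x y μ x' ⟨i, j, rfl, rfl⟩ hs
    rcases step_par_inv hs with ⟨t', ht, rfl⟩ | ⟨u', hu, rfl⟩ | ⟨β, t', u', hβ, ht, hu, _, _⟩
    · obtain ⟨i', rfl, rfl, rfl⟩ := step_ch_inv ht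
      refine ⟨ch a (i' + j), ?_, Or.inl ⟨i', j, rfl, rfl⟩⟩
      have : i' + 1 + j = (i' + j) + 1 := by omega
      rw [this]; exact step_ch a _
    · obtain ⟨j', rfl, rfl, rfl⟩ := step_ch_inv hu
      refine ⟨ch a (i + j'), ?_, Or.inl ⟨i, j', rfl, rfl⟩⟩
      have : i + (j' + 1) = (i + j') + 1 := by omega
      rw [this]; exact step_ch a _
    · obtain ⟨i', _, rfl, _⟩ := step_ch_inv ht
      obtain ⟨j', _, hco, _⟩ := step_ch_inv hu
      simp [Act.co] at hco
  · rintro x y μ y' ⟨i, j, rfl, rfl⟩ hs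
    obtain ⟨m, hm, rfl, rfl⟩ := step_ch_inv hs
    cases i with
    | zero =>
      cases j with
      | zero => omega
      | succ j' =>
        refine ⟨.par (ch a 0) (ch a j'), Step.parR (step_ch a j'), Or.inl ⟨0, j', rfl, ?_⟩⟩
        congr 1; omega
    | succ i' =>
      refine ⟨.par (ch a i') (ch a j), Step.parL (step_ch a i'), Or.inl ⟨i', j, rfl, ?_⟩⟩
      congr 1; omega

/-- F1: a parallel composition bisimilar to a chain splits into chains. -/
lemma par_chain_split_left {a : A} {p q : Tm A} {k : ℕ} (h : Bisim (.par p q) (ch a k)) :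
    Bisim p (ch a (sdepth p)) := by
  refine bisim_of_rel2
    (fun x y => ∃ t k', Bisim (.par x t) (ch a k') ∧ y = ch a (sdepth x)) ?_ ?_ ⟨q, k, h, rfl⟩
  · rintro x y μ x' ⟨t, k', hpar, rfl⟩ hs
    obtain ⟨k'', hk, hμ, hb⟩ := bisim_ch_step hpar (Step.parL hs (u := t))
    subst hμ
    have hd1 : sdepth x + sdepth t = k' := by
      have := bisim_ch_sdepth hpar; simpa [sdepth] using this
    have hd2 : sdepth x' + sdepth t = k'' := by
      have := bisim_ch_sdepth hb; simpa [sdepth] using this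
    have hx : sdepth x = sdepth x' + 1 := by omega
    refine ⟨ch a (sdepth x'), ?_, Or.inl ⟨t, k'', hb, rfl⟩⟩
    rw [hx]; exact step_ch a _
  · rintro x y μ y' ⟨t, k', hpar, rfl⟩ hs
    obtain ⟨m, hm, rfl, rfl⟩ := step_ch_inv hs
    obtain ⟨ν, x', hs', hd'⟩ := sdepth_realize x (by omega)
    obtain ⟨k'', hk, hμ, hb⟩ := bisim_ch_step hpar (Step.parL hs' (u := t))
    subst hμ
    have hd2 : sdepth x' + sdepth t = k'' := by
      have := bisim_ch_sdepth hb; simpa [sdepth] using this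
    have : m = sdepth x' := by
      have hd1 : sdepth x + sdepth t = k' := by
        have := bisim_ch_sdepth hpar; simpa [sdepth] using this
      omega
    subst this
    exact ⟨x', hs', Or.inl ⟨t, k'', hb, rfl⟩⟩

lemma par_chain_split {a : A} {p q : Tm A} {k : ℕ} (h : Bisim (.par p q) (ch a k)) :
    Bisim p (ch a (sdepth p)) ∧ Bisim q (ch a (sdepth q)) ∧ sdepth p + sdepth q = k := by
  refine ⟨par_chain_split_left h, ?_, ?_⟩
  · exact par_chain_split_left (bisim_trans (bisim_par_comm q p) h)
  · have := bisim_ch_sdepth h; simpa [sdepth] using this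

end Moller

namespace Moller
variable {A : Type}

/-! ### The processes `An` and `Bt` -/

def An (a : A) (n : ℕ) : Tm A := sumF (ch a) n

def Bt (a : A) (n l : ℕ) : Tm A := .par (An a n) (ch a l)

lemma step_sumF_inv {g : ℕ → Tm A} : ∀ {m : ℕ} {μ : Act A} {d : Tm A},
    Step (sumF g m) μ d → ∃ i, 1 ≤ i ∧ i ≤ m ∧ Step (g i) μ d := by
  intro m
  induction m with
  | zero => intro μ d h; exact absurd h (noStep_nil _ _)
  | succ m ih =>
    intro μ d h
    cases m with
    | zero => exact ⟨1, le_refl _, le_refl _, h⟩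
    | succ m' =>
      rcases step_plus_inv h with h | h
      · obtain ⟨i, h1, h2, h3⟩ := ih h
        exact ⟨i, h1, by omega, h3⟩
      · exact ⟨m' + 2, by omega, le_refl _, h⟩

lemma step_sumF {g : ℕ → Tm A} : ∀ {m i : ℕ} {μ : Act A} {d : Tm A},
    1 ≤ i → i ≤ m → Step (g i) μ d → Step (sumF g m) μ d := by
  intro m
  induction m with
  | zero => intro i μ d h1 h2 _; omega
  | succ m ih =>
    intro i μ d h1 h2 h3
    cases m with
    | zero =>
      have : i = 1 := by omega
      subst this; exact h3
    | succ m' =>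
      by_cases hi : i = m' + 2
      · subst hi; exact Step.plusR h3
      · exact Step.plusL (ih h1 (by omega) h3)

lemma step_An_inv {a : A} {n : ℕ} {μ : Act A} {d : Tm A} (h : Step (An a n) μ d) :
    μ = Act.name a ∧ ∃ j, j < n ∧ d = ch a j := by
  obtain ⟨i, h1, h2, h3⟩ := step_sumF_inv h
  obtain ⟨k', rfl, rfl, rfl⟩ := step_ch_inv h3
  exact ⟨rfl, k', by omega, rfl⟩

lemma step_An {a : A} {n j : ℕ} (hj : j < n) : Step (An a n) (Act.name a) (ch a j) :=
  step_sumF (i := j + 1) (by omega) (by omega) (step_ch a j)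

lemma sdepth_An (a : A) : ∀ n, sdepth (An a n) = n := by
  intro n
  induction n with
  | zero => rfl
  | succ n ih =>
    cases n with
    | zero => simp [An, sumF, sdepth_ch]
    | succ n' =>
      show sdepth (.plus (sumF (ch a) (n'+1)) (ch a (n'+2))) = n'+2
      have : sdepth (sumF (ch a) (n'+1)) = n'+1 := ih
      simp [sdepth, this, sdepth_ch]

lemma sdepth_Bt (a : A) (n l : ℕ) : sdepth (Bt a n l) = n + l := by
  simp [Bt, sdepth, sdepth_An, sdepth_ch]

lemma closed_sumF {g : ℕ → Tm A} (hg : ∀ i, Closed (g i)) : ∀ m, Closed (sumF g m) := by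
  intro m
  induction m with
  | zero => trivial
  | succ m ih =>
    cases m with
    | zero => exact hg 1
    | succ m' => exact ⟨ih, hg _⟩

lemma closed_An (a : A) (n : ℕ) : Closed (An a n) := closed_sumF (closed_ch a) n

lemma closed_Bt (a : A) (n l : ℕ) : Closed (Bt a n l) := ⟨closed_An a n, closed_ch a l⟩

lemma step_Bt_inv {a : A} {n l : ℕ} {μ : Act A} {d : Tm A} (h : Step (Bt a n l) μ d) :
    μ = Act.name a ∧ ((∃ j, j < n ∧ d = .par (ch a j) (ch a l)) ∨
      (∃ l', l = l' + 1 ∧ d = .par (An a n) (ch a l'))) := by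
  rcases step_par_inv h with ⟨t', ht, rfl⟩ | ⟨u', hu, rfl⟩ | ⟨β, t', u', hβ, ht, hu, rfl, rfl⟩
  · obtain ⟨rfl, j, hj, rfl⟩ := step_An_inv ht
    exact ⟨rfl, Or.inl ⟨j, hj, rfl⟩⟩
  · obtain ⟨l', rfl, rfl, rfl⟩ := step_ch_inv hu
    exact ⟨rfl, Or.inr ⟨l', rfl, rfl⟩⟩
  · obtain ⟨rfl, _, _, _⟩ := step_An_inv ht
    obtain ⟨_, _, hco, _⟩ := step_ch_inv hu
    simp [Act.co] at hco

lemma bisim_Bt_step {a : A} {n l : ℕ} {p d : Tm A} {μ : Act A}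
    (h : Bisim p (Bt a n l)) (hs : Step p μ d) :
    μ = Act.name a ∧ ((∃ j, j < n ∧ Bisim d (ch a (j + l))) ∨
      (∃ l', l = l' + 1 ∧ Bisim d (Bt a n l'))) := by
  obtain ⟨q', hq', hb⟩ := bisim_step h hs
  obtain ⟨rfl, hcase⟩ := step_Bt_inv hq'
  refine ⟨rfl, ?_⟩
  rcases hcase with ⟨j, hj, rfl⟩ | ⟨l', rfl, rfl⟩
  · exact Or.inl ⟨j, hj, bisim_trans hb (bisim_ch_par_add a j l)⟩
  · exact Or.inr ⟨l', rfl, hb⟩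

lemma bisim_Bt_realize_chain {a : A} {n l j : ℕ} {p : Tm A} (hj : j < n)
    (h : Bisim p (Bt a n l)) : ∃ d, Step p (Act.name a) d ∧ Bisim d (ch a (j + l)) := by
  obtain ⟨d, hd, hb⟩ := bisim_step' h (Step.parL (step_An hj))
  exact ⟨d, hd, bisim_trans hb (bisim_ch_par_add a j l)⟩

lemma bisim_Bt_realize_B {a : A} {n l : ℕ} {p : Tm A} (h : Bisim p (Bt a n (l+1))) :
    ∃ d, Step p (Act.name a) d ∧ Bisim d (Bt a n l) := by
  obtain ⟨d, hd, hb⟩ := bisim_step' h (Step.parR (step_ch a l))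
  exact ⟨d, hd, hb⟩

lemma Bt_ne_chain {a : A} {n : ℕ} (hn : 2 ≤ n) (l k : ℕ) : ¬ Bisim (Bt a n l) (ch a k) := by
  intro h
  have s1 : Step (Bt a n l) (Act.name a) (.par (ch a 0) (ch a l)) :=
    Step.parL (step_An (by omega))
  have s2 : Step (Bt a n l) (Act.name a) (.par (ch a (n-1)) (ch a l)) :=
    Step.parL (step_An (by omega))
  have hb := chain_derivs_bisim h s1 s2
  have := bisim_sdepth hb
  simp [sdepth, sdepth_ch] at this
  omega

lemma bisim_Bt_chain_absurd {a : A} {n : ℕ} (hn : 2 ≤ n) {l k : ℕ} {p : Tm A}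
    (h1 : Bisim p (Bt a n l)) (h2 : Bisim p (ch a k)) : False :=
  Bt_ne_chain hn l k (bisim_trans (bisim_symm h1) h2)

lemma Bt_inj {a : A} {n l l' : ℕ} (h : Bisim (Bt a n l) (Bt a n l')) : l = l' := by
  have := bisim_sdepth h
  simp [sdepth_Bt] at this
  omega

/-! ### Cancellation of chains against `Bt` -/

lemma chain_cancel {a : A} {n : ℕ} (hn : 2 ≤ n) :
    ∀ (j : ℕ) {p : Tm A} {m : ℕ}, Bisim (.par p (ch a j)) (Bt a n m) →
      j ≤ m ∧ Bisim p (Bt a n (m - j)) := by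
  intro j
  induction j with
  | zero =>
    intro p m h
    refine ⟨Nat.zero_le _, ?_⟩
    have : Bisim p (.par p (ch a 0)) := bisim_symm (bisim_par_nil p)
    simpa using bisim_trans this h
  | succ j ih =>
    intro p m h
    obtain ⟨q', hq', hb⟩ := bisim_step h (Step.parR (step_ch a j))
    obtain ⟨_, hcase⟩ := step_Bt_inv hq'
    rcases hcase with ⟨j', hj', rfl⟩ | ⟨m', rfl, rfl⟩
    · exfalso
      have hc : Bisim (.par p (ch a j)) (ch a (j' + m)) :=
        bisim_trans hb (bisim_ch_par_add a j' m)
      have hp := (par_chain_split hc).1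
      have : Bisim (.par p (ch a (j+1))) (ch a (sdepth p + (j+1))) :=
        bisim_trans (bisim_par hp (bisim_refl _)) (bisim_ch_par_add a _ _)
      exact bisim_Bt_chain_absurd hn h this
    · obtain ⟨h1, h2⟩ := ih hb
      refine ⟨by omega, ?_⟩
      have : m' + 1 - (j + 1) = m' - j := by omega
      rwa [this]

/-! ### Factorization against `Bt` -/

lemma par_Bt_split {a : A} {n : ℕ} (hn : 2 ≤ n) :
    ∀ (l : ℕ) {p q : Tm A}, Bisim (.par p q) (Bt a n l) →
      ∃ i, i ≤ l ∧ ((Bisim p (ch a i) ∧ Bisim q (Bt a n (l - i))) ∨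
        (Bisim q (ch a i) ∧ Bisim p (Bt a n (l - i)))) := by
  intro l
  induction l using Nat.strong_induction_on with
  | _ l IH =>
    intro p q h
    by_cases hp : NoStep p
    · refine ⟨0, Nat.zero_le _, Or.inl ⟨bisim_ch_zero hp, ?_⟩⟩
      have h1 : Bisim q (.par q (ch a 0)) := bisim_symm (bisim_par_nil q)
      have h2 : Bisim (.par q (ch a 0)) (.par q p) :=
        bisim_par (bisim_refl q) (bisim_symm (bisim_ch_zero hp))
      have h3 : Bisim (.par q p) (.par p q) := bisim_par_comm q p
      simpa using bisim_trans (bisim_trans h1 (bisim_trans h2 h3)) h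
    by_cases hq : NoStep q
    · refine ⟨0, Nat.zero_le _, Or.inr ⟨bisim_ch_zero hq, ?_⟩⟩
      have h1 : Bisim p (.par p (ch a 0)) := bisim_symm (bisim_par_nil p)
      have h2 : Bisim (.par p (ch a 0)) (.par p q) :=
        bisim_par (bisim_refl p) (bisim_symm (bisim_ch_zero hq))
      simpa using bisim_trans (bisim_trans h1 h2) h
    -- both have steps
    have hpstep : ∃ μ p', Step p μ p' := by
      by_contra hc; push_neg at hc; exact hp (fun μ q hs => hc μ q hs)
    have hqstep : ∃ μ q', Step q μ q' := by
      by_contra hc; push_neg at hc; exact hq (fun μ q' hs => hc μ q' hs)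
    cases l with
    | zero =>
      obtain ⟨μ, q', hq'⟩ := hqstep
      obtain ⟨_, hcase⟩ := bisim_Bt_step h (Step.parR hq')
      rcases hcase with ⟨j, hj, hc⟩ | ⟨l', hl', _⟩
      · have hpch := (par_chain_split hc).1
        have hcomm : Bisim (.par q (ch a (sdepth p))) (Bt a n 0) := by
          refine bisim_trans ?_ (bisim_trans (bisim_par_comm q p) h)
          exact bisim_par (bisim_refl q) (bisim_symm hpch)
        obtain ⟨hle, hqB⟩ := chain_cancel hn _ hcomm
        have hdp : sdepth p = 0 := by omega
        rw [hdp] at hpch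
        exact ⟨0, le_refl _, Or.inl ⟨hpch, by simpa using hqB⟩⟩
      · omega
    | succ l' =>
      -- a core handling one orientation
      have core : ∀ p q p' : Tm A, Bisim (.par p q) (Bt a n (l'+1)) →
          (∃ μ p₀, Step p μ p₀) →
          Step p (Act.name a) p' → Bisim (.par p' q) (Bt a n l') →
          ∃ i, i ≤ l' + 1 ∧ ((Bisim p (ch a i) ∧ Bisim q (Bt a n (l' + 1 - i))) ∨
            (Bisim q (ch a i) ∧ Bisim p (Bt a n (l' + 1 - i)))) := by
        intro p q p' h hpstep hstep hb
        obtain ⟨i', hi', hcase⟩ := IH l' (by omega) hb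
        rcases hcase with ⟨hp', hq2⟩ | ⟨hq', hp2⟩
        · -- p' chain, q ∼ Bt (l'-i')
          have hall : ∀ μ p'', Step p μ p'' → μ = Act.name a ∧ Bisim p'' (ch a i') := by
            intro μ p'' hs
            obtain ⟨rfl, hcase2⟩ := bisim_Bt_step h (Step.parL hs)
            refine ⟨rfl, ?_⟩
            rcases hcase2 with ⟨j, hj, hc⟩ | ⟨l'', hl'', hB⟩
            · exfalso
              have hqch := (par_chain_split hc).2.1
              exact bisim_Bt_chain_absurd hn hq2 hqch
            · have hleq : l'' = l' := by omega
              rw [hleq] at hB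
              obtain ⟨i'', hi'', hcase3⟩ := IH l' (by omega) hB
              rcases hcase3 with ⟨hp'', hq3⟩ | ⟨hq3, _⟩
              · have he1 : l' - i' = l' - i'' := Bt_inj (bisim_trans (bisim_symm hq2) hq3)
                have he2 : i'' = i' := by omega
                rw [he2] at hp''; exact hp''
              · exfalso
                exact bisim_Bt_chain_absurd hn hq2 hq3
          have hpch : Bisim p (ch a (i' + 1)) := bisim_ch_succ hpstep hall
          have hcomm : Bisim (.par q (ch a (i' + 1))) (Bt a n (l' + 1)) := by
            refine bisim_trans ?_ (bisim_trans (bisim_par_comm q p) h)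
            exact bisim_par (bisim_refl q) (bisim_symm hpch)
          obtain ⟨hle, hqB⟩ := chain_cancel hn _ hcomm
          exact ⟨i' + 1, hle, Or.inl ⟨hpch, hqB⟩⟩
        · -- q chain
          have hcong : Bisim (.par p (ch a i')) (Bt a n (l' + 1)) :=
            bisim_trans (bisim_par (bisim_refl p) (bisim_symm hq')) h
          obtain ⟨hle, hpB⟩ := chain_cancel hn _ hcong
          exact ⟨i', hle, Or.inr ⟨hq', hpB⟩⟩
      obtain ⟨d, hd, hb⟩ := bisim_Bt_realize_B h
      rcases step_par_inv hd with ⟨p', hsp, rfl⟩ | ⟨q', hsq, rfl⟩ |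
        ⟨β, t', u', hβ, ht, hu, htau, _⟩
      · exact core p q p' h hpstep hsp hb
      · have hcomm : Bisim (.par q p) (Bt a n (l' + 1)) :=
          bisim_trans (bisim_par_comm q p) h
        have hbcomm : Bisim (.par q' p) (Bt a n l') :=
          bisim_trans (bisim_par_comm q' p) hb
        obtain ⟨i, hi, hcase⟩ := core q p q' hcomm hqstep hsq hbcomm
        rcases hcase with ⟨h1, h2⟩ | ⟨h1, h2⟩
        · exact ⟨i, hi, Or.inr ⟨h1, h2⟩⟩
        · exact ⟨i, hi, Or.inl ⟨h1, h2⟩⟩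
      · simp at htau

end Moller

namespace Moller
variable {A : Type}

/-! ### Summands -/

def NotPlus : Tm A → Prop
  | .plus _ _ => False
  | _ => True

def NotVar : Tm A → Prop
  | .var _ => False
  | _ => True

inductive Smd : Tm A → Tm A → Prop
  | base {s : Tm A} : NotPlus s → Smd s s
  | pl {s p q : Tm A} : Smd s p → Smd s (.plus p q)
  | pr {s p q : Tm A} : Smd s q → Smd s (.plus p q)

lemma smd_step {s p : Tm A} (h : Smd s p) : ∀ {μ d}, Step s μ d → Step p μ d := by
  induction h with
  | base _ => intro μ d h; exact h
  | pl _ ih => intro μ d h; exact Step.plusL (ih h)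
  | pr _ ih => intro μ d h; exact Step.plusR (ih h)

lemma smd_subst_var {y : ℕ} {σ : ℕ → Tm A} {s : Tm A} : ∀ {v : Tm A},
    Smd (.var y) v → Smd s (σ y) → Smd s (subst σ v) := by
  intro v h
  induction h with
  | base _ => intro h'; exact h'
  | pl _ ih => intro h'; exact Smd.pl (ih h')
  | pr _ ih => intro h'; exact Smd.pr (ih h')

lemma notPlus_subst {σ : ℕ → Tm A} {v : Tm A} (h1 : NotPlus v) (h2 : NotVar v) :
    NotPlus (subst σ v) := by
  cases v <;> simp [NotPlus, NotVar, subst] at *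

lemma smd_subst {σ : ℕ → Tm A} {v₀ v : Tm A} (h : Smd v₀ v) (h2 : NotVar v₀) :
    Smd (subst σ v₀) (subst σ v) := by
  induction h with
  | base h1 => exact Smd.base (notPlus_subst h1 h2)
  | pl _ ih => exact Smd.pl ih
  | pr _ ih => exact Smd.pr ih

lemma smd_subst_inv {σ : ℕ → Tm A} {s : Tm A} : ∀ {v : Tm A}, Smd s (subst σ v) →
    ∃ v₀, Smd v₀ v ∧ ((∃ x, v₀ = .var x ∧ Smd s (σ x)) ∨
      (s = subst σ v₀ ∧ NotPlus v₀ ∧ NotVar v₀)) := by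
  intro v
  induction v with
  | nil =>
    intro h; cases h with
    | base _ => exact ⟨.nil, Smd.base trivial, Or.inr ⟨rfl, trivial, trivial⟩⟩
  | var x => intro h; exact ⟨.var x, Smd.base trivial, Or.inl ⟨x, rfl, h⟩⟩
  | pre μ t ih =>
    intro h; cases h with
    | base _ => exact ⟨.pre μ t, Smd.base trivial, Or.inr ⟨rfl, trivial, trivial⟩⟩
  | plus t u iht ihu =>
    intro h
    cases h with
    | base hnp => exact absurd hnp (by simp [NotPlus, subst])
    | pl h =>
      obtain ⟨v₀, h1, h2⟩ := iht h
      exact ⟨v₀, Smd.pl h1, h2⟩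
    | pr h =>
      obtain ⟨v₀, h1, h2⟩ := ihu h
      exact ⟨v₀, Smd.pr h1, h2⟩
  | par t u iht ihu =>
    intro h; cases h with
    | base _ => exact ⟨.par t u, Smd.base trivial, Or.inr ⟨rfl, trivial, trivial⟩⟩

/-! ### The invariant property -/

inductive Good (a : A) (n : ℕ) : Tm A → Prop
  | split {s₁ s₂ : Tm A} : ¬ Bisim s₁ .nil → ¬ Bisim s₂ .nil → Good a n (.par s₁ s₂)
  | padL {s₁ s₂ s : Tm A} : Bisim s₂ .nil → Smd s s₁ → Bisim s (Bt a n 1) → Good a n s →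
      Good a n (.par s₁ s₂)
  | padR {s₁ s₂ s : Tm A} : Bisim s₁ .nil → Smd s s₂ → Bisim s (Bt a n 1) → Good a n s →
      Good a n (.par s₁ s₂)

def HasP (a : A) (n : ℕ) (p : Tm A) : Prop :=
  ∃ s, Smd s p ∧ Bisim s (Bt a n 1) ∧ Good a n s

lemma hasP_plusL {a : A} {n : ℕ} {p q : Tm A} (h : HasP a n p) : HasP a n (.plus p q) := by
  obtain ⟨s, h1, h2, h3⟩ := h; exact ⟨s, Smd.pl h1, h2, h3⟩

lemma hasP_plusR {a : A} {n : ℕ} {p q : Tm A} (h : HasP a n q) : HasP a n (.plus p q) := by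
  obtain ⟨s, h1, h2, h3⟩ := h; exact ⟨s, Smd.pr h1, h2, h3⟩

/-! ### Basket -/

def InBasket (a : A) (n : ℕ) (d : Tm A) : Prop :=
  Bisim d (Bt a n 0) ∨ ∃ i, 1 ≤ i ∧ i ≤ n ∧ Bisim d (ch a i)

def BasketBound (a : A) (n : ℕ) (w : Tm A) : Prop :=
  ∀ μ d, Step w μ d → μ = Act.name a ∧ InBasket a n d

def Full (a : A) (n : ℕ) (w : Tm A) : Prop :=
  (∃ d, Step w (Act.name a) d ∧ Bisim d (Bt a n 0)) ∧
  ∀ i, 1 ≤ i → i ≤ n → ∃ d, Step w (Act.name a) d ∧ Bisim d (ch a i)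

lemma basketBound_of_Bt1 {a : A} {n : ℕ} {w : Tm A} (h : Bisim w (Bt a n 1)) :
    BasketBound a n w := by
  intro μ d hs
  obtain ⟨rfl, hcase⟩ := bisim_Bt_step h hs
  refine ⟨rfl, ?_⟩
  rcases hcase with ⟨j, hj, hc⟩ | ⟨l', hl', hB⟩
  · exact Or.inr ⟨j + 1, by omega, by omega, hc⟩
  · have : l' = 0 := by omega
    subst this
    exact Or.inl hB

lemma full_of_Bt1 {a : A} {n : ℕ} {w : Tm A} (h : Bisim w (Bt a n 1)) : Full a n w := by
  constructor
  · exact bisim_Bt_realize_B (l := 0) h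
  · intro i h1 h2
    obtain ⟨d, hd, hb⟩ := bisim_Bt_realize_chain (j := i - 1) (by omega) h
    refine ⟨d, hd, ?_⟩
    have : i - 1 + 1 = i := by omega
    rwa [this] at hb

lemma bisim_Bt1_of_full {a : A} {n : ℕ} (hn : 2 ≤ n) {w : Tm A}
    (hb : BasketBound a n w) (hf : Full a n w) : Bisim w (Bt a n 1) := by
  refine bisim_of_rel2 (fun x y => x = w ∧ y = Bt a n 1) ?_ ?_ ⟨rfl, rfl⟩
  · rintro x y μ x' ⟨rfl, rfl⟩ hs
    obtain ⟨rfl, hcase⟩ := hb _ _ hs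
    rcases hcase with hB | ⟨i, h1, h2, hc⟩
    · exact ⟨.par (An a n) (ch a 0), Step.parR (step_ch a 0), Or.inr (Or.inr hB)⟩
    · refine ⟨.par (ch a (i-1)) (ch a 1), Step.parL (step_An (by omega)), Or.inr (Or.inr ?_)⟩
      refine bisim_trans hc (bisim_symm ?_)
      have := bisim_ch_par_add a (i-1) 1
      have heq : i - 1 + 1 = i := by omega
      rwa [heq] at this
  · rintro x y μ y' ⟨rfl, rfl⟩ hs
    obtain ⟨rfl, hcase⟩ := step_Bt_inv hs
    rcases hcase with ⟨j, hj, rfl⟩ | ⟨l', hl', rfl⟩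
    · obtain ⟨d, hd, hc⟩ := hf.2 (j+1) (by omega) (by omega)
      refine ⟨d, hd, Or.inr (Or.inr (bisim_trans hc (bisim_symm ?_)))⟩
      exact bisim_ch_par_add a j 1
    · have : l' = 0 := by omega
      subst this
      obtain ⟨d, hd, hc⟩ := hf.1
      exact ⟨d, hd, Or.inr (Or.inr hc)⟩

lemma not_bisim_pre_Bt1 {a : A} {n : ℕ} (hn : 2 ≤ n) {μ : Act A} {w : Tm A} :
    ¬ Bisim (.pre μ w) (Bt a n 1) := by
  intro h
  obtain ⟨d1, hd1, hb1⟩ := (full_of_Bt1 h).1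
  obtain ⟨d2, hd2, hb2⟩ := (full_of_Bt1 h).2 n (by omega) (le_refl _)
  obtain ⟨_, rfl⟩ := step_pre_inv hd1
  obtain ⟨_, rfl⟩ := step_pre_inv hd2
  exact bisim_Bt_chain_absurd hn hb1 hb2

lemma not_bisim_noStep_Bt1 {a : A} {n : ℕ} {w : Tm A} (hw : NoStep w) :
    ¬ Bisim w (Bt a n 1) := by
  intro h
  obtain ⟨d, hd, _⟩ := bisim_Bt_realize_B (l := 0) h
  exact hw _ _ hd

/-- SANDWICH-2: if `p`'s steps embed into `q ∼ T` and `p` has a summand `∼ T`, then `p ∼ T`. -/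
lemma bisim_sandwich {p q s T : Tm A}
    (hsub : ∀ μ d, Step p μ d → Step q μ d) (hq : Bisim q T)
    (hs : Smd s p) (hsT : Bisim s T) : Bisim p T := by
  refine bisim_of_rel2 (fun x y => x = p ∧ y = T) ?_ ?_ ⟨rfl, rfl⟩
  · rintro x y μ x' ⟨rfl, rfl⟩ hstep
    obtain ⟨d', hd', hb⟩ := bisim_step hq (hsub _ _ hstep)
    exact ⟨d', hd', Or.inr (Or.inr hb)⟩
  · rintro x y μ y' ⟨rfl, rfl⟩ hstep
    obtain ⟨d, hd, hb⟩ := bisim_step' hsT hstep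
    exact ⟨d, smd_step hs hd, Or.inr (Or.inr hb)⟩

/-! ### Chain exposure contradiction -/

lemma has_step_of_occurs {ρ : ℕ → Tm A} {y : ℕ} (hstep : ∃ μ d, Step (ρ y) μ d) :
    ∀ {w : Tm A}, Occurs y w → ∃ μ d, Step (subst ρ w) μ d := by
  intro w
  induction w with
  | nil => intro h; exact absurd h id
  | var x =>
    intro h
    have hx : x = y := h
    subst hx
    exact hstep
  | pre μ t ih => intro _; exact ⟨μ, subst ρ t, Step.pre _ _⟩
  | plus t u iht ihu =>
    rintro (h | h)
    · obtain ⟨μ, d, hd⟩ := iht h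
      exact ⟨μ, d, Step.plusL hd⟩
    · obtain ⟨μ, d, hd⟩ := ihu h
      exact ⟨μ, d, Step.plusR hd⟩
  | par t u iht ihu =>
    rintro (h | h)
    · obtain ⟨μ, d, hd⟩ := iht h
      exact ⟨μ, .par d (subst ρ u), Step.parL hd⟩
    · obtain ⟨μ, d, hd⟩ := ihu h
      exact ⟨μ, .par (subst ρ t) d, Step.parR hd⟩

lemma cec {a : A} {ρ : ℕ → Tm A} {y : ℕ} {d₁ d₂ : Tm A} {μ₁ μ₂ : Act A}
    (h1 : Step (ρ y) μ₁ d₁) (h2 : Step (ρ y) μ₂ d₂) (hne : ¬ Bisim d₁ d₂) :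
    ∀ {w : Tm A} {k : ℕ}, Occurs y w → ¬ Bisim (subst ρ w) (ch a k) := by
  intro w
  induction w with
  | nil => intro k h; exact absurd h id
  | var x =>
    intro k hocc hb
    have hx : x = y := hocc
    rw [show (subst ρ (.var x) : Tm A) = ρ y from by rw [hx]; rfl] at hb
    exact hne (chain_derivs_bisim hb h1 h2)
  | pre ν t ih =>
    intro k hocc hb
    obtain ⟨k', hk, _, hc⟩ := bisim_ch_step hb (Step.pre ν (subst ρ t))
    exact ih hocc hc
  | plus t u iht ihu =>
    rintro k (hocc | hocc) hb
    · obtain ⟨μ, d, hd⟩ := has_step_of_occurs ⟨μ₁, d₁, h1⟩ hocc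
      obtain ⟨k', hk, _, _⟩ := bisim_ch_step hb (Step.plusL hd (u := subst ρ u))
      have hall : ∀ μ d, Step (subst ρ t) μ d → μ = Act.name a ∧ Bisim d (ch a k') := by
        intro μ d hd'
        obtain ⟨k'', hk'', hμ, hc⟩ := bisim_ch_step hb (Step.plusL hd' (u := subst ρ u))
        have : k'' = k' := by omega
        subst this
        exact ⟨hμ, hc⟩
      exact iht hocc (bisim_ch_succ ⟨μ, d, hd⟩ hall)
    · obtain ⟨μ, d, hd⟩ := has_step_of_occurs ⟨μ₁, d₁, h1⟩ hocc
      obtain ⟨k', hk, _, _⟩ := bisim_ch_step hb (Step.plusR hd (t := subst ρ t))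
      have hall : ∀ μ d, Step (subst ρ u) μ d → μ = Act.name a ∧ Bisim d (ch a k') := by
        intro μ d hd'
        obtain ⟨k'', hk'', hμ, hc⟩ := bisim_ch_step hb (Step.plusR hd' (t := subst ρ t))
        have : k'' = k' := by omega
        subst this
        exact ⟨hμ, hc⟩
      exact ihu hocc (bisim_ch_succ ⟨μ, d, hd⟩ hall)
  | par t u iht ihu =>
    rintro k (hocc | hocc) hb
    · exact iht hocc (par_chain_split hb).1
    · exact ihu hocc (par_chain_split hb).2.1

end Moller

namespace Moller
variable {A : Type}

/-! ### Variable access paths -/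

inductive VAcc (y : ℕ) : Tm A → List (Tm A) → Prop
  | found {v : Tm A} : Smd (.var y) v → VAcc y v []
  | parL {v v₁ v₂ : Tm A} {L : List (Tm A)} : Smd (.par v₁ v₂) v → VAcc y v₁ L →
      VAcc y v (v₂ :: L)
  | parR {v v₁ v₂ : Tm A} {L : List (Tm A)} : Smd (.par v₁ v₂) v → VAcc y v₂ L →
      VAcc y v (v₁ :: L)

lemma vacc_mono {y : ℕ} {v v' : Tm A} {L : List (Tm A)}
    (hmono : ∀ s, Smd s v → Smd s v') (h : VAcc y v L) : VAcc y v' L := by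
  cases h with
  | found h => exact VAcc.found (hmono _ h)
  | parL h1 h2 => exact VAcc.parL (hmono _ h1) h2
  | parR h1 h2 => exact VAcc.parR (hmono _ h1) h2

lemma vacc_occurs {y : ℕ} {v : Tm A} {L : List (Tm A)} (h : VAcc y v L) : Occurs y v := by
  have hsmd : ∀ (s v : Tm A), Smd s v → Occurs y s → Occurs y v := by
    intro s v h
    induction h with
    | base _ => exact id
    | pl _ ih => intro h'; exact Or.inl (ih h')
    | pr _ ih => intro h'; exact Or.inr (ih h')
  induction h with
  | found h => exact hsmd _ _ h rfl
  | parL h1 _ ih => exact hsmd _ _ h1 (Or.inl ih)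
  | parR h1 _ ih => exact hsmd _ _ h1 (Or.inr ih)

def parFold : Tm A → List (Tm A) → Tm A
  | d, [] => d
  | d, c :: L => .par (parFold d L) c

lemma step_smd_var {y : ℕ} {ρ : ℕ → Tm A} {μ : Act A} {d : Tm A} : ∀ {v : Tm A},
    Smd (.var y) v → Step (ρ y) μ d → Step (subst ρ v) μ d := by
  intro v h
  induction h with
  | base _ => intro h'; exact h'
  | pl _ ih => intro h'; exact Step.plusL (ih h')
  | pr _ ih => intro h'; exact Step.plusR (ih h')

lemma vacc_lift {y : ℕ} {v : Tm A} {L : List (Tm A)} (h : VAcc y v L) (ρ : ℕ → Tm A)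
    {μ : Act A} {d : Tm A} (hd : Step (ρ y) μ d) :
    ∃ z, Step (subst ρ v) μ z ∧ Bisim z (parFold d (L.map (subst ρ))) := by
  induction h with
  | found h => exact ⟨d, step_smd_var h hd, bisim_refl d⟩
  | parL h1 h2 ih =>
    obtain ⟨z₁, hz₁, hb₁⟩ := ih
    refine ⟨.par z₁ (subst ρ _), smd_step (smd_subst h1 trivial) (Step.parL hz₁), ?_⟩
    exact bisim_par hb₁ (bisim_refl _)
  | parR h1 h2 ih =>
    obtain ⟨z₂, hz₂, hb₂⟩ := ih
    refine ⟨.par (subst ρ _) z₂, smd_step (smd_subst h1 trivial) (Step.parR hz₂), ?_⟩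
    exact bisim_trans (bisim_par_comm _ _) (bisim_par hb₂ (bisim_refl _))

/-- Chain values of a list of complements. -/
def ChVals (a : A) (σ : ℕ → Tm A) : List (Tm A) → ℕ → Prop
  | [], S => S = 0
  | c :: L, S => ∃ j S', Bisim (subst σ c) (ch a j) ∧ ChVals a σ L S' ∧ S = j + S'

lemma parFold_bisim {a : A} {σ : ℕ → Tm A} {d d' : Tm A} (hd : Bisim d d') :
    ∀ {L : List (Tm A)} {S : ℕ}, ChVals a σ L S →
      Bisim (parFold d (L.map (subst σ))) (.par d' (ch a S)) := by
  intro L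
  induction L with
  | nil =>
    intro S hS
    have : S = 0 := hS
    subst this
    exact bisim_trans hd (bisim_symm (bisim_par_nil d'))
  | cons c L ih =>
    rintro S ⟨j, S', hc, hL, rfl⟩
    show Bisim (.par (parFold d (L.map (subst σ))) (subst σ c)) _
    have h1 : Bisim (.par (parFold d (L.map (subst σ))) (subst σ c))
        (.par (.par d' (ch a S')) (ch a j)) := bisim_par (ih hL) hc
    have h2 := bisim_par_assoc d' (ch a S') (ch a j)
    have h3 : Bisim (.par (ch a S') (ch a j)) (ch a (j + S')) := by
      have := bisim_ch_par_add a S' j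
      have heq : S' + j = j + S' := by omega
      rwa [heq] at this
    exact bisim_trans h1 (bisim_trans h2 (bisim_par (bisim_refl d') h3))

/-! ### Splitting lists of steps -/

lemma split_plus_steps {P Q : Tm A} {ν : Act A} : ∀ (ds : List (Tm A)),
    (∀ d ∈ ds, Step (.plus P Q) ν d) →
    ∃ l₁ l₂ : List (Tm A), l₁.Sublist ds ∧ l₂.Sublist ds ∧
      l₁.length + l₂.length = ds.length ∧
      (∀ d ∈ l₁, Step P ν d) ∧ (∀ d ∈ l₂, Step Q ν d) := by
  intro ds
  induction ds with
  | nil => intro _; exact ⟨[], [], List.Sublist.refl _, List.Sublist.refl _, rfl,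
      by simp, by simp⟩
  | cons d rest ih =>
    intro h
    obtain ⟨l₁, l₂, s₁, s₂, hlen, h₁, h₂⟩ := ih (fun d hd => h d (List.mem_cons_of_mem _ hd))
    rcases step_plus_inv (h d (List.mem_cons_self)) with hs | hs
    · refine ⟨d :: l₁, l₂, s₁.cons₂ d, s₂.cons d, by simp [hlen]; omega, ?_, h₂⟩
      intro e he
      rcases List.mem_cons.mp he with rfl | he
      · exact hs
      · exact h₁ e he
    · refine ⟨l₁, d :: l₂, s₁.cons d, s₂.cons₂ d, by simp [hlen]; omega, h₁, ?_⟩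
      intro e he
      rcases List.mem_cons.mp he with rfl | he
      · exact hs
      · exact h₂ e he

lemma split_par_steps {a : A} {P Q : Tm A} : ∀ (ds : List (Tm A)),
    (∀ d ∈ ds, Step (.par P Q) (Act.name a) d) →
    ∃ l₁ l₂ : List (Tm A),
      (l₁.map (fun d => Tm.par d Q)).Sublist ds ∧
      (l₂.map (fun d => Tm.par P d)).Sublist ds ∧
      l₁.length + l₂.length = ds.length ∧
      (∀ d ∈ l₁, Step P (Act.name a) d) ∧ (∀ d ∈ l₂, Step Q (Act.name a) d) := by
  intro ds
  induction ds with
  | nil => intro _; exact ⟨[], [], by simp, by simp, rfl, by simp, by simp⟩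
  | cons d rest ih =>
    intro h
    obtain ⟨l₁, l₂, s₁, s₂, hlen, h₁, h₂⟩ := ih (fun d hd => h d (List.mem_cons_of_mem _ hd))
    rcases step_par_inv (h d (List.mem_cons_self)) with ⟨d', hd', rfl⟩ | ⟨d', hd', rfl⟩ |
      ⟨β, t', u', hβ, _, _, htau, _⟩
    · refine ⟨d' :: l₁, l₂, ?_, s₂.cons _, by simp [← hlen]; omega, ?_, h₂⟩
      · simpa using s₁.cons₂ (Tm.par d' Q)
      · intro e he
        rcases List.mem_cons.mp he with rfl | he
        · exact hd'
        · exact h₁ e he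
    · refine ⟨l₁, d' :: l₂, s₁.cons _, ?_, by simp [← hlen]; omega, h₁, ?_⟩
      · simpa using s₂.cons₂ (Tm.par P d')
      · intro e he
        rcases List.mem_cons.mp he with rfl | he
        · exact hd'
        · exact h₂ e he
    · simp at htau

/-! ### The pigeonhole witness lemma -/

def ChainSteps (a : A) (w : Tm A) : Prop :=
  ∀ μ d, Step w μ d → μ = Act.name a ∧ ∃ k, Bisim d (ch a k)

lemma ph {a : A} : ∀ (v : Tm A) (σ : ℕ → Tm A),
    ChainSteps a (subst σ v) →
    ∀ ds : List (Tm A), (∀ d ∈ ds, Step (subst σ v) (Act.name a) d) →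
    List.Pairwise (fun x y => ¬ Bisim x y) ds →
    tsize v < ds.length →
    ∃ y L, VAcc y v L ∧ (∀ c ∈ L, ∃ j, Bisim (subst σ c) (ch a j)) ∧
      ∃ d₁ d₂ μ₁ μ₂, Step (σ y) μ₁ d₁ ∧ Step (σ y) μ₂ d₂ ∧ ¬ Bisim d₁ d₂ := by
  intro v
  induction v with
  | nil =>
    intro σ _ ds hds _ hlen
    match ds, hlen with
    | d :: rest, _ => exact absurd (hds d (List.mem_cons_self)) (noStep_nil _ _)
  | var x =>
    intro σ _ ds hds hpw hlen
    match ds, hpw, hlen with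
    | d₁ :: d₂ :: rest, hpw, _ =>
      refine ⟨x, [], VAcc.found (Smd.base trivial), by simp, d₁, d₂, _, _,
        hds d₁ (by simp), hds d₂ (by simp), ?_⟩
      exact (List.pairwise_cons.mp hpw).1 d₂ (by simp)
  | pre ν t ih =>
    intro σ _ ds hds hpw hlen
    match ds, hpw, hlen with
    | d₁ :: d₂ :: rest, hpw, _ =>
      exfalso
      obtain ⟨_, he₁⟩ := step_pre_inv (hds d₁ (by simp))
      obtain ⟨_, he₂⟩ := step_pre_inv (hds d₂ (by simp))
      subst he₁; subst he₂
      exact (List.pairwise_cons.mp hpw).1 _ (by simp) (bisim_refl _)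
  | plus t u iht ihu =>
    intro σ hcs ds hds hpw hlen
    obtain ⟨l₁, l₂, s₁, s₂, hlensum, h₁, h₂⟩ := split_plus_steps ds hds
    have hcs₁ : ChainSteps a (subst σ t) := by
      intro μ d hd
      exact hcs μ d (Step.plusL hd)
    have hcs₂ : ChainSteps a (subst σ u) := by
      intro μ d hd
      exact hcs μ d (Step.plusR hd)
    have hsz : tsize (Tm.plus t u) = tsize t + tsize u + 1 := rfl
    by_cases hc : tsize t < l₁.length
    · obtain ⟨y, L, hacc, hch, hw⟩ := iht σ hcs₁ l₁ h₁ (hpw.sublist s₁) hc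
      exact ⟨y, L, vacc_mono (fun s hs => Smd.pl hs) hacc, hch, hw⟩
    · have : tsize u < l₂.length := by omega
      obtain ⟨y, L, hacc, hch, hw⟩ := ihu σ hcs₂ l₂ h₂ (hpw.sublist s₂) this
      exact ⟨y, L, vacc_mono (fun s hs => Smd.pr hs) hacc, hch, hw⟩
  | par t u iht ihu =>
    intro σ hcs ds hds hpw hlen
    obtain ⟨l₁, l₂, s₁, s₂, hlensum, h₁, h₂⟩ := split_par_steps ds hds
    have hsz : tsize (Tm.par t u) = tsize t + tsize u + 1 := rfl
    by_cases hc : tsize t < l₁.length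
    · -- recurse into t; the complement u is a chain
      have hl₁ne : l₁ ≠ [] := by
        intro h; rw [h] at hc; simp at hc
      obtain ⟨d₀, hd₀⟩ := List.exists_mem_of_ne_nil l₁ hl₁ne
      have hstep₀ : Step (.par (subst σ t) (subst σ u)) (Act.name a)
          (.par d₀ (subst σ u)) := Step.parL (h₁ d₀ hd₀)
      obtain ⟨_, k, hk⟩ := hcs _ _ hstep₀
      have huch : Bisim (subst σ u) (ch a (sdepth (subst σ u))) := (par_chain_split hk).2.1
      have hcs₁ : ChainSteps a (subst σ t) := by
        intro μ d hd
        obtain ⟨hμ, k', hk'⟩ := hcs μ _ (Step.parL hd (u := subst σ u))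
        exact ⟨hμ, _, (par_chain_split hk').1⟩
      have hpw₁ : List.Pairwise (fun x y => ¬ Bisim x y) l₁ := by
        have := hpw.sublist s₁
        rw [List.pairwise_map] at this
        exact this.imp (fun hne hb => hne (bisim_par hb (bisim_refl _)))
      obtain ⟨y, L, hacc, hch, hw⟩ := iht σ hcs₁ l₁ h₁ hpw₁ hc
      refine ⟨y, u :: L, VAcc.parL (Smd.base trivial) hacc, ?_, hw⟩
      intro c hcmem
      rcases List.mem_cons.mp hcmem with rfl | hcmem
      · exact ⟨_, huch⟩
      · exact hch c hcmem
    · have hc₂ : tsize u < l₂.length := by omega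
      have hl₂ne : l₂ ≠ [] := by
        intro h; rw [h] at hc₂; simp at hc₂
      obtain ⟨d₀, hd₀⟩ := List.exists_mem_of_ne_nil l₂ hl₂ne
      have hstep₀ : Step (.par (subst σ t) (subst σ u)) (Act.name a)
          (.par (subst σ t) d₀) := Step.parR (h₂ d₀ hd₀)
      obtain ⟨_, k, hk⟩ := hcs _ _ hstep₀
      have htch : Bisim (subst σ t) (ch a (sdepth (subst σ t))) := (par_chain_split hk).1
      have hcs₂ : ChainSteps a (subst σ u) := by
        intro μ d hd
        obtain ⟨hμ, k', hk'⟩ := hcs μ _ (Step.parR hd (t := subst σ t))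
        exact ⟨hμ, _, (par_chain_split hk').2.1⟩
      have hpw₂ : List.Pairwise (fun x y => ¬ Bisim x y) l₂ := by
        have := hpw.sublist s₂
        rw [List.pairwise_map] at this
        exact this.imp (fun hne hb => hne (bisim_par (bisim_refl _) hb))
      obtain ⟨y, L, hacc, hch, hw⟩ := ihu σ hcs₂ l₂ h₂ hpw₂ hc₂
      refine ⟨y, t :: L, VAcc.parR (Smd.base trivial) hacc, ?_, hw⟩
      intro c hcmem
      rcases List.mem_cons.mp hcmem with rfl | hcmem
      · exact ⟨_, htch⟩
      · exact hch c hcmem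

end Moller

namespace Moller
variable {A : Type}

lemma tsize_smd {s v : Tm A} (h : Smd s v) : tsize s ≤ tsize v := by
  induction h with
  | base _ => exact le_refl _
  | pl _ ih => show _ ≤ tsize _ + tsize _ + 1; omega
  | pr _ ih => show _ ≤ tsize _ + tsize _ + 1; omega

lemma bisim_drop_nil_right {X Y T : Tm A} (h : Bisim (.par X Y) T) (hY : Bisim Y .nil) :
    Bisim X T := by
  refine bisim_trans (bisim_trans (bisim_symm (bisim_par_nil X)) ?_) h
  exact bisim_par (bisim_refl X) (bisim_symm hY)

lemma bisim_drop_nil_left {X Y T : Tm A} (h : Bisim (.par X Y) T) (hX : Bisim X .nil) :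
    Bisim Y T :=
  bisim_drop_nil_right (bisim_trans (bisim_par_comm Y X) h) hX

lemma chvals_of_forall {a : A} {σ : ℕ → Tm A} : ∀ {L : List (Tm A)},
    (∀ c ∈ L, ∃ j, Bisim (subst σ c) (ch a j)) → ∃ S, ChVals a σ L S := by
  intro L
  induction L with
  | nil => intro _; exact ⟨0, rfl⟩
  | cons c L ih =>
    intro h
    obtain ⟨S', hS'⟩ := ih (fun c hc => h c (List.mem_cons_of_mem _ hc))
    obtain ⟨j, hj⟩ := h c (List.mem_cons_self)
    exact ⟨j + S', j, S', hj, hS', rfl⟩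

/-- From `w ∼ Bt a n 0` build `n` pairwise non-bisimilar derivatives. -/
lemma exists_pairwise_list {a : A} {n : ℕ} {w : Tm A} (h : Bisim w (Bt a n 0)) :
    ∃ ds : List (Tm A), ds.length = n ∧ (∀ d ∈ ds, Step w (Act.name a) d) ∧
      List.Pairwise (fun x y => ¬ Bisim x y) ds := by
  have key : ∀ m, m ≤ n → ∃ ds : List (Tm A), ds.length = m ∧
      (∀ d ∈ ds, Step w (Act.name a) d) ∧
      List.Pairwise (fun x y => ¬ Bisim x y) ds ∧
      (∀ d ∈ ds, ∃ j, n - m ≤ j ∧ j < n ∧ Bisim d (ch a j)) := by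
    intro m
    induction m with
    | zero => intro _; exact ⟨[], rfl, by simp, by simp, by simp⟩
    | succ m ih =>
      intro hm
      obtain ⟨ds, hlen, hsteps, hpw, hvals⟩ := ih (by omega)
      obtain ⟨d₀, hd₀, hb₀⟩ := bisim_Bt_realize_chain (j := n - (m+1)) (by omega) h
      rw [show n - (m+1) + 0 = n - (m+1) from by omega] at hb₀
      refine ⟨d₀ :: ds, by simp [hlen], ?_, ?_, ?_⟩
      · intro d hd
        rcases List.mem_cons.mp hd with rfl | hd
        · exact hd₀
        · exact hsteps d hd
      · refine List.pairwise_cons.mpr ⟨?_, hpw⟩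
        intro e he hbe
        obtain ⟨j, hj1, hj2, hbj⟩ := hvals e he
        have : Bisim (ch a (n - (m+1))) (ch a j) :=
          bisim_trans (bisim_symm hb₀) (bisim_trans hbe hbj)
        have := bisim_ch_inj this
        omega
      · intro d hd
        rcases List.mem_cons.mp hd with rfl | hd
        · exact ⟨n - (m+1), le_refl _, by omega, hb₀⟩
        · obtain ⟨j, hj1, hj2, hbj⟩ := hvals d hd
          exact ⟨j, by omega, hj2, hbj⟩
  obtain ⟨ds, h1, h2, h3, _⟩ := key n (le_refl n)
  exact ⟨ds, h1, h2, h3⟩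

lemma chainSteps_of_Bt0 {a : A} {n : ℕ} {w : Tm A} (h : Bisim w (Bt a n 0)) :
    ChainSteps a w := by
  intro μ d hd
  obtain ⟨rfl, hcase⟩ := bisim_Bt_step h hd
  rcases hcase with ⟨j, hj, hc⟩ | ⟨l', hl', _⟩
  · exact ⟨rfl, _, hc⟩
  · omega

/-- The witness datum extracted on the left-hand side. -/
def Wit (a : A) (n : ℕ) (σ : ℕ → Tm A) (v : Tm A) : Prop :=
  ∃ y L S, VAcc y v L ∧ ChVals a σ L S ∧
    ((S = 0 ∧ Bisim (σ y) (Bt a n 1) ∧ HasP a n (σ y)) ∨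
     (1 ≤ S ∧ ∃ d₁ d₂ μ₁ μ₂, Step (σ y) μ₁ d₁ ∧ Step (σ y) μ₂ d₂ ∧ ¬ Bisim d₁ d₂))

lemma two_distinct_of_Bt1 {a : A} {n : ℕ} (hn : 2 ≤ n) {w : Tm A} (h : Bisim w (Bt a n 1)) :
    ∃ d₁ d₂ μ₁ μ₂, Step w μ₁ d₁ ∧ Step w μ₂ d₂ ∧ ¬ Bisim d₁ d₂ := by
  obtain ⟨d₁, hd₁, hb₁⟩ := (full_of_Bt1 h).1
  obtain ⟨d₂, hd₂, hb₂⟩ := (full_of_Bt1 h).2 n (by omega) (le_refl _)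
  refine ⟨d₁, d₂, _, _, hd₁, hd₂, ?_⟩
  intro hb
  exact bisim_Bt_chain_absurd hn hb₁ (bisim_trans hb hb₂)

lemma wit_two_distinct {a : A} {n : ℕ} (hn : 2 ≤ n) {σ : ℕ → Tm A} {v : Tm A}
    (h : Wit a n σ v) : ∃ y L S, VAcc y v L ∧ ChVals a σ L S ∧
      (∃ d₁ d₂ μ₁ μ₂, Step (σ y) μ₁ d₁ ∧ Step (σ y) μ₂ d₂ ∧ ¬ Bisim d₁ d₂) := by
  obtain ⟨y, L, S, h1, h2, h3⟩ := h
  refine ⟨y, L, S, h1, h2, ?_⟩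
  rcases h3 with ⟨_, hB, _⟩ | ⟨_, hd⟩
  · exact two_distinct_of_Bt1 hn hB
  · exact hd

/-- EXTRACT: from a `Good` summand of `subst σ v` bisimilar to `Bt a n 1`,
extract a witness variable. -/
lemma extract {a : A} {n : ℕ} (hn : 2 ≤ n) :
    ∀ (N : ℕ) (v : Tm A) (σ : ℕ → Tm A), tsize v ≤ N → tsize v < n →
    Bisim (subst σ v) (Bt a n 1) →
    ∀ s, Smd s (subst σ v) → Bisim s (Bt a n 1) → Good a n s →
    Wit a n σ v := by
  intro N
  induction N with
  | zero => intro v σ hN; have := tsize_pos v; omega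
  | succ N ihN =>
    intro v σ hN hsz hv s hsmd hsB hgood
    obtain ⟨v₀, hsmd₀, hcase⟩ := smd_subst_inv hsmd
    rcases hcase with ⟨x, rfl, hs_in⟩ | ⟨rfl, hnp, hnv⟩
    · -- the summand comes from a variable x
      have hsub : ∀ μ d, Step (σ x) μ d → Step (subst σ v) μ d := by
        intro μ d hd
        exact step_smd_var hsmd₀ hd
      have hxB : Bisim (σ x) (Bt a n 1) := bisim_sandwich hsub hv hs_in hsB
      exact ⟨x, [], 0, VAcc.found hsmd₀, rfl, Or.inl ⟨rfl, hxB, s, hs_in, hsB, hgood⟩⟩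
    · -- the summand is the instance of a non-variable summand v₀ of v
      cases v₀ with
      | nil => exact absurd hsB (not_bisim_noStep_Bt1 noStep_nil)
      | var x => exact absurd hnv id
      | plus t u => exact absurd hnp id
      | pre ν t => exact absurd hsB (not_bisim_pre_Bt1 hn)
      | par t₁ t₂ =>
        have hsz₀ : tsize (Tm.par t₁ t₂) ≤ tsize v := tsize_smd hsmd₀
        have hsz₁ : tsize t₁ + tsize t₂ + 1 ≤ tsize v := hsz₀
        cases hgood with
        | split h₁ h₂ =>
          obtain ⟨i, hi, hsplit⟩ := par_Bt_split hn 1 hsB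
          rcases hsplit with ⟨hp, hq⟩ | ⟨hq, hp⟩
          · -- subst σ t₁ ∼ ch i, subst σ t₂ ∼ Bt (1-i)
            cases i with
            | zero => exact absurd hp h₁
            | succ i' =>
              have hi1 : i' = 0 := by omega
              subst hi1
              -- σ t₂ ∼ Bt 0: pigeonhole inside t₂
              have hq0 : Bisim (subst σ t₂) (Bt a n 0) := by simpa using hq
              obtain ⟨ds, hdl, hdsteps, hdpw⟩ := exists_pairwise_list hq0
              obtain ⟨y, L₂, hacc, hch, hw⟩ := ph t₂ σ (chainSteps_of_Bt0 hq0) ds hdsteps hdpw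
                (by omega)
              obtain ⟨S₂, hS₂⟩ := chvals_of_forall hch
              refine ⟨y, t₁ :: L₂, 1 + S₂, VAcc.parR hsmd₀ hacc, ⟨1, S₂, hp, hS₂, rfl⟩,
                Or.inr ⟨by omega, hw⟩⟩
          · -- symmetric: subst σ t₂ ∼ ch i, subst σ t₁ ∼ Bt (1-i)
            cases i with
            | zero => exact absurd hq h₂
            | succ i' =>
              have hi1 : i' = 0 := by omega
              subst hi1
              have hp0 : Bisim (subst σ t₁) (Bt a n 0) := by simpa using hp
              obtain ⟨ds, hdl, hdsteps, hdpw⟩ := exists_pairwise_list hp0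
              obtain ⟨y, L₁, hacc, hch, hw⟩ := ph t₁ σ (chainSteps_of_Bt0 hp0) ds hdsteps hdpw
                (by omega)
              obtain ⟨S₁, hS₁⟩ := chvals_of_forall hch
              refine ⟨y, t₂ :: L₁, 1 + S₁, VAcc.parL hsmd₀ hacc, ⟨1, S₁, hq, hS₁, rfl⟩,
                Or.inr ⟨by omega, hw⟩⟩
        | padL h₂nil hsmd' hs'B hgood' =>
          have ht₁B : Bisim (subst σ t₁) (Bt a n 1) := bisim_drop_nil_right hsB h₂nil
          obtain ⟨y, L, S, hacc, hchv, hkind⟩ :=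
            ihN t₁ σ (by omega) (by omega) ht₁B _ hsmd' hs'B hgood'
          refine ⟨y, t₂ :: L, 0 + S, VAcc.parL hsmd₀ hacc, ⟨0, S, h₂nil, hchv, rfl⟩, ?_⟩
          rcases hkind with ⟨rfl, h1, h2⟩ | ⟨h1, h2⟩
          · exact Or.inl ⟨rfl, h1, h2⟩
          · exact Or.inr ⟨by omega, h2⟩
        | padR h₁nil hsmd' hs'B hgood' =>
          have ht₂B : Bisim (subst σ t₂) (Bt a n 1) := bisim_drop_nil_left hsB h₁nil
          obtain ⟨y, L, S, hacc, hchv, hkind⟩ :=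
            ihN t₂ σ (by omega) (by omega) ht₂B _ hsmd' hs'B hgood'
          refine ⟨y, t₁ :: L, 0 + S, VAcc.parR hsmd₀ hacc, ⟨0, S, h₁nil, hchv, rfl⟩, ?_⟩
          rcases hkind with ⟨rfl, h1, h2⟩ | ⟨h1, h2⟩
          · exact Or.inl ⟨rfl, h1, h2⟩
          · exact Or.inr ⟨by omega, h2⟩

end Moller

namespace Moller
variable {A : Type}

/-- USL: tracing a deep chain derivative of a probed instance back to an access path. -/
lemma usl {a : A} {n : ℕ} {σ ρ : ℕ → Tm A} {y N : ℕ}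
    (hρy : ρ y = .plus (σ y) (ch a (N+1)))
    (hρx : ∀ x, x ≠ y → ρ x = σ x)
    (hd2 : ∃ d₁ d₂ μ₁ μ₂, Step (σ y) μ₁ d₁ ∧ Step (σ y) μ₂ d₂ ∧ ¬ Bisim d₁ d₂) :
    ∀ (w : Tm A) (m : ℕ) (r : Tm A),
      sdepth (subst σ w) ≤ n + 1 →
      Step (subst ρ w) (Act.name a) r → Bisim r (ch a m) →
      n + 2 + (n+1) * tsize w ≤ m →
      ∃ L S, VAcc y w L ∧ ChVals a σ L S ∧ m = N + S := by
  obtain ⟨d₁, d₂, μ₁, μ₂, hs₁, hs₂, hne⟩ := hd2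
  have hs₁ρ : Step (ρ y) μ₁ d₁ := by rw [hρy]; exact Step.plusL hs₁
  have hs₂ρ : Step (ρ y) μ₂ d₂ := by rw [hρy]; exact Step.plusL hs₂
  have hagree : ∀ w : Tm A, ¬ Occurs y w → subst ρ w = subst σ w := by
    intro w h
    refine subst_agree (fun x hx => hρx x ?_)
    intro he
    exact h (he ▸ hx)
  intro w
  induction w with
  | nil =>
    intro m r _ hstep
    exact absurd hstep (noStep_nil _ _)
  | var x =>
    intro m r hdep hstep hch hthr
    by_cases hx : x = y
    · subst hx
      rw [show (subst ρ (.var x) : Tm A) = ρ x from rfl, hρy] at hstep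
      rcases step_plus_inv hstep with hstep | hstep
      · exfalso
        have h1 : sdepth r < sdepth (σ x) := sdepth_step hstep
        have h2 : sdepth r = m := bisim_ch_sdepth hch
        have h3 : sdepth (subst σ (.var x) : Tm A) = sdepth (σ x) := rfl
        omega
      · obtain ⟨k', hk', _, rfl⟩ := step_ch_inv hstep
        have hm : m = k' := bisim_ch_inj (bisim_symm hch)
        exact ⟨[], 0, VAcc.found (Smd.base trivial), rfl, by omega⟩
    · exfalso
      rw [show (subst ρ (.var x) : Tm A) = ρ x from rfl, hρx x hx] at hstep
      have h1 : sdepth r < sdepth (σ x) := sdepth_step hstep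
      have h2 : sdepth r = m := bisim_ch_sdepth hch
      have h3 : sdepth (subst σ (.var x) : Tm A) = sdepth (σ x) := rfl
      omega
  | pre ν w₁ ih =>
    intro m r hdep hstep hch hthr
    exfalso
    obtain ⟨_, rfl⟩ := step_pre_inv hstep
    by_cases hocc : Occurs y w₁
    · exact cec hs₁ρ hs₂ρ hne hocc hch
    · rw [hagree w₁ hocc] at hch
      have h1 : sdepth (subst σ w₁) = m := bisim_ch_sdepth hch
      have h2 : sdepth (subst σ (.pre ν w₁)) = sdepth (subst σ w₁) + 1 := rfl
      omega
  | plus w₁ w₂ ih₁ ih₂ =>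
    intro m r hdep hstep hch hthr
    have hdep₁ : sdepth (subst σ w₁) ≤ n + 1 := by
      have : sdepth (subst σ (.plus w₁ w₂)) =
        max (sdepth (subst σ w₁)) (sdepth (subst σ w₂)) := rfl
      omega
    have hdep₂ : sdepth (subst σ w₂) ≤ n + 1 := by
      have : sdepth (subst σ (.plus w₁ w₂)) =
        max (sdepth (subst σ w₁)) (sdepth (subst σ w₂)) := rfl
      omega
    have hts : tsize (Tm.plus w₁ w₂) = tsize w₁ + tsize w₂ + 1 := rfl
    have h1 := tsize_pos w₁
    have h2 := tsize_pos w₂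
    rcases step_plus_inv hstep with hstep | hstep
    · by_cases hocc : Occurs y w₁
      · obtain ⟨L, S, hacc, hchv, heq⟩ := ih₁ m r hdep₁ hstep hch (by
          have : (n+1) * tsize w₁ ≤ (n+1) * tsize (Tm.plus w₁ w₂) := by
            apply Nat.mul_le_mul_left; omega
          omega)
        exact ⟨L, S, vacc_mono (fun s hs => Smd.pl hs) hacc, hchv, heq⟩
      · exfalso
        rw [hagree w₁ hocc] at hstep
        have ha1 : sdepth r < sdepth (subst σ w₁) := sdepth_step hstep
        have ha2 : sdepth r = m := bisim_ch_sdepth hch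
        omega
    · by_cases hocc : Occurs y w₂
      · obtain ⟨L, S, hacc, hchv, heq⟩ := ih₂ m r hdep₂ hstep hch (by
          have : (n+1) * tsize w₂ ≤ (n+1) * tsize (Tm.plus w₁ w₂) := by
            apply Nat.mul_le_mul_left; omega
          omega)
        exact ⟨L, S, vacc_mono (fun s hs => Smd.pr hs) hacc, hchv, heq⟩
      · exfalso
        rw [hagree w₂ hocc] at hstep
        have ha1 : sdepth r < sdepth (subst σ w₂) := sdepth_step hstep
        have ha2 : sdepth r = m := bisim_ch_sdepth hch
        omega
  | par w₁ w₂ ih₁ ih₂ =>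
    intro m r hdep hstep hch hthr
    have hdep₁ : sdepth (subst σ w₁) ≤ n + 1 := by
      have : sdepth (subst σ (.par w₁ w₂)) =
        sdepth (subst σ w₁) + sdepth (subst σ w₂) := rfl
      omega
    have hdep₂ : sdepth (subst σ w₂) ≤ n + 1 := by
      have : sdepth (subst σ (.par w₁ w₂)) =
        sdepth (subst σ w₁) + sdepth (subst σ w₂) := rfl
      omega
    have hts : tsize (Tm.par w₁ w₂) = tsize w₁ + tsize w₂ + 1 := rfl
    have hprod : (n+1) * tsize (Tm.par w₁ w₂) = (n+1) * (tsize w₁ + tsize w₂ + 1) := by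
      rw [hts]
    have htp1 := tsize_pos w₁
    have htp2 := tsize_pos w₂
    have hbig : n + 1 ≤ (n+1) * (tsize w₁ + tsize w₂ + 1) :=
      Nat.le_mul_of_pos_right _ (by omega)
    rcases step_par_inv hstep with ⟨r₁, hr₁, rfl⟩ | ⟨r₂, hr₂, rfl⟩ |
      ⟨β, t', u', hβ, _, _, htau, _⟩
    · -- step in the left component
      obtain ⟨hc₁, hc₂, hsum⟩ := par_chain_split hch
      by_cases hocc₂ : Occurs y w₂
      · exact absurd hc₂ (cec hs₁ρ hs₂ρ hne hocc₂)
      rw [hagree w₂ hocc₂] at hc₂ hsum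
      by_cases hocc₁ : Occurs y w₁
      · obtain ⟨L₁, S₁, hacc₁, hchv₁, heq₁⟩ := ih₁ (sdepth r₁) r₁ hdep₁ hr₁ hc₁ (by
          have hj₂ : sdepth (subst σ w₂) ≤ n + 1 := hdep₂
          have hmul : (n+1) * (tsize w₁ + tsize w₂ + 1) ≥ (n+1) * tsize w₁ + (n+1) := by
            have : tsize w₁ + 1 ≤ tsize w₁ + tsize w₂ + 1 := by omega
            calc (n+1) * (tsize w₁ + tsize w₂ + 1) ≥ (n+1) * (tsize w₁ + 1) :=
                  Nat.mul_le_mul_left _ this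
              _ = (n+1) * tsize w₁ + (n+1) := by ring
          omega)
        refine ⟨w₂ :: L₁, sdepth (subst σ w₂) + S₁, VAcc.parL (Smd.base trivial) hacc₁,
          ⟨sdepth (subst σ w₂), S₁, hc₂, hchv₁, rfl⟩, by omega⟩
      · exfalso
        rw [hagree w₁ hocc₁] at hr₁
        have ha1 : sdepth r₁ < sdepth (subst σ w₁) := sdepth_step hr₁
        omega
    · -- step in the right component
      obtain ⟨hc₁, hc₂, hsum⟩ := par_chain_split hch
      by_cases hocc₁ : Occurs y w₁
      · exact absurd hc₁ (cec hs₁ρ hs₂ρ hne hocc₁)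
      rw [hagree w₁ hocc₁] at hc₁ hsum
      by_cases hocc₂ : Occurs y w₂
      · obtain ⟨L₂, S₂, hacc₂, hchv₂, heq₂⟩ := ih₂ (sdepth r₂) r₂ hdep₂ hr₂ hc₂ (by
          have hmul : (n+1) * (tsize w₁ + tsize w₂ + 1) ≥ (n+1) * tsize w₂ + (n+1) := by
            have : tsize w₂ + 1 ≤ tsize w₁ + tsize w₂ + 1 := by omega
            calc (n+1) * (tsize w₁ + tsize w₂ + 1) ≥ (n+1) * (tsize w₂ + 1) :=
                  Nat.mul_le_mul_left _ this
              _ = (n+1) * tsize w₂ + (n+1) := by ring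
          omega)
        refine ⟨w₁ :: L₂, sdepth (subst σ w₁) + S₂, VAcc.parR (Smd.base trivial) hacc₂,
          ⟨sdepth (subst σ w₁), S₂, hc₁, hchv₂, rfl⟩, by omega⟩
      · exfalso
        rw [hagree w₂ hocc₂] at hr₂
        have ha1 : sdepth r₂ < sdepth (subst σ w₂) := sdepth_step hr₂
        omega
    · simp at htau

end Moller

namespace Moller
variable {A : Type}

lemma bisim_nil_noStep {X : Tm A} (h : Bisim X .nil) : NoStep X :=
  noStep_of_bisim (bisim_symm h) noStep_nil

lemma not_bisim_nil_of_step {X : Tm A} {μ : Act A} {d : Tm A} (h : Step X μ d) :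
    ¬ Bisim X .nil := fun hb => bisim_nil_noStep hb μ d h

lemma inBasket_bisim {a : A} {n : ℕ} {x x' : Tm A} (h : Bisim x' x) :
    InBasket a n x → InBasket a n x' := by
  rintro (h1 | ⟨i, h1, h2, h3⟩)
  · exact Or.inl (bisim_trans h h1)
  · exact Or.inr ⟨i, h1, h2, bisim_trans h h3⟩

lemma bisim_par_nil_right {X Y : Tm A} (hY : Bisim Y .nil) : Bisim (.par X Y) X :=
  bisim_trans (bisim_par (bisim_refl X) hY) (bisim_par_nil X)

lemma bisim_par_nil_left {X Y : Tm A} (hX : Bisim X .nil) : Bisim (.par X Y) Y :=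
  bisim_trans (bisim_par_comm X Y) (bisim_par_nil_right hX)

lemma wrap_padL {a : A} {n : ℕ} (hn : 2 ≤ n) {X Y : Tm A}
    (hBB : BasketBound a n (.par X Y)) (hnil : Bisim Y .nil)
    (hs : ∃ s, Smd s X ∧ Bisim s (Bt a n 1) ∧ Good a n s) :
    Bisim (.par X Y) (Bt a n 1) ∧ Good a n (.par X Y) := by
  obtain ⟨s, h1, h2, h3⟩ := hs
  have hdrop : ∀ d : Tm A, Bisim (.par d Y) d := fun d => bisim_par_nil_right hnil
  constructor
  · refine bisim_Bt1_of_full hn hBB ⟨?_, ?_⟩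
    · obtain ⟨d, hd, hb⟩ := (full_of_Bt1 h2).1
      exact ⟨.par d Y, Step.parL (smd_step h1 hd), bisim_trans (hdrop d) hb⟩
    · intro i hi1 hi2
      obtain ⟨d, hd, hb⟩ := (full_of_Bt1 h2).2 i hi1 hi2
      exact ⟨.par d Y, Step.parL (smd_step h1 hd), bisim_trans (hdrop d) hb⟩
  · exact Good.padL hnil h1 h2 h3

lemma wrap_padR {a : A} {n : ℕ} (hn : 2 ≤ n) {X Y : Tm A}
    (hBB : BasketBound a n (.par X Y)) (hnil : Bisim X .nil)
    (hs : ∃ s, Smd s Y ∧ Bisim s (Bt a n 1) ∧ Good a n s) :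
    Bisim (.par X Y) (Bt a n 1) ∧ Good a n (.par X Y) := by
  obtain ⟨s, h1, h2, h3⟩ := hs
  have hdrop : ∀ d : Tm A, Bisim (.par X d) d := fun d => bisim_par_nil_left hnil
  constructor
  · refine bisim_Bt1_of_full hn hBB ⟨?_, ?_⟩
    · obtain ⟨d, hd, hb⟩ := (full_of_Bt1 h2).1
      exact ⟨.par X d, Step.parR (smd_step h1 hd), bisim_trans (hdrop d) hb⟩
    · intro i hi1 hi2
      obtain ⟨d, hd, hb⟩ := (full_of_Bt1 h2).2 i hi1 hi2
      exact ⟨.par X d, Step.parR (smd_step h1 hd), bisim_trans (hdrop d) hb⟩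
  · exact Good.padR hnil h1 h2 h3

/-- A-BUILD: rebuilding a good summand along a pad-only access path. -/
lemma abuild {a : A} {n : ℕ} (hn : 2 ≤ n) {σ : ℕ → Tm A} {y : ℕ} :
    ∀ {w : Tm A} {L : List (Tm A)}, VAcc y w L → ChVals a σ L 0 →
    BasketBound a n (subst σ w) →
    Bisim (σ y) (Bt a n 1) → HasP a n (σ y) →
    ∃ s, Smd s (subst σ w) ∧ Bisim s (Bt a n 1) ∧ Good a n s := by
  intro w L h
  induction h with
  | found hsmd =>
    intro _ _ _ hHP
    obtain ⟨s, h1, h2, h3⟩ := hHP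
    exact ⟨s, smd_subst_var hsmd h1, h2, h3⟩
  | @parL v v₁ v₂ L hsmd hacc ih =>
    rintro ⟨j, S', hcj, hL', heq⟩ hBB hyB hHP
    have hj : j = 0 := by omega
    have hS' : S' = 0 := by omega
    subst hj; subst hS'
    have hnodesmd : Smd (subst σ (.par v₁ v₂)) (subst σ v) := smd_subst hsmd trivial
    have hBBnode : BasketBound a n (.par (subst σ v₁) (subst σ v₂)) := by
      intro μ d hd
      exact hBB μ d (smd_step hnodesmd hd)
    have hBB₁ : BasketBound a n (subst σ v₁) := by
      intro μ d hd
      obtain ⟨hμ, hin⟩ := hBBnode μ (.par d (subst σ v₂)) (Step.parL hd)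
      exact ⟨hμ, inBasket_bisim (bisim_symm (bisim_par_nil_right hcj)) hin⟩
    obtain ⟨hB, hG⟩ := wrap_padL hn hBBnode hcj (ih hL' hBB₁ hyB hHP)
    exact ⟨subst σ (.par v₁ v₂), hnodesmd, hB, hG⟩
  | @parR v v₁ v₂ L hsmd hacc ih =>
    rintro ⟨j, S', hcj, hL', heq⟩ hBB hyB hHP
    have hj : j = 0 := by omega
    have hS' : S' = 0 := by omega
    subst hj; subst hS'
    have hnodesmd : Smd (subst σ (.par v₁ v₂)) (subst σ v) := smd_subst hsmd trivial
    have hBBnode : BasketBound a n (.par (subst σ v₁) (subst σ v₂)) := by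
      intro μ d hd
      exact hBB μ d (smd_step hnodesmd hd)
    have hBB₂ : BasketBound a n (subst σ v₂) := by
      intro μ d hd
      obtain ⟨hμ, hin⟩ := hBBnode μ (.par (subst σ v₁) d) (Step.parR hd)
      exact ⟨hμ, inBasket_bisim (bisim_symm (bisim_par_nil_left hcj)) hin⟩
    obtain ⟨hB, hG⟩ := wrap_padR hn hBBnode hcj (ih hL' hBB₂ hyB hHP)
    exact ⟨subst σ (.par v₁ v₂), hnodesmd, hB, hG⟩

/-- B-BUILD: rebuilding a good summand along an access path with positive chain weight. -/
lemma bbuild {a : A} {n : ℕ} (hn : 2 ≤ n) {σ : ℕ → Tm A} {y : ℕ}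
    (hd2 : ∃ d₁ d₂ μ₁ μ₂, Step (σ y) μ₁ d₁ ∧ Step (σ y) μ₂ d₂ ∧ ¬ Bisim d₁ d₂) :
    ∀ {w : Tm A} {L : List (Tm A)}, VAcc y w L → ∀ S, ChVals a σ L S → 1 ≤ S →
    BasketBound a n (subst σ w) →
    ∃ s, Smd s (subst σ w) ∧ Bisim s (Bt a n 1) ∧ Good a n s := by
  intro w L h
  induction h with
  | found hsmd =>
    intro S hS hS1 _
    have : S = 0 := hS
    omega
  | @parL v v₁ v₂ L hsmd hacc ih =>
    rintro S ⟨j, S', hcj, hL', heq⟩ hS1 hBB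
    have hnodesmd : Smd (subst σ (.par v₁ v₂)) (subst σ v) := smd_subst hsmd trivial
    have hBBnode : BasketBound a n (.par (subst σ v₁) (subst σ v₂)) := by
      intro μ d hd
      exact hBB μ d (smd_step hnodesmd hd)
    cases j with
    | zero =>
      -- pad node: recurse
      have hBB₁ : BasketBound a n (subst σ v₁) := by
        intro μ d hd
        obtain ⟨hμ, hin⟩ := hBBnode μ (.par d (subst σ v₂)) (Step.parL hd)
        exact ⟨hμ, inBasket_bisim (bisim_symm (bisim_par_nil_right hcj)) hin⟩
      obtain ⟨hB, hG⟩ := wrap_padL hn hBBnode hcj (ih S' hL' (by omega) hBB₁)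
      exact ⟨subst σ (.par v₁ v₂), hnodesmd, hB, hG⟩
    | succ j' =>
      -- terminal node
      obtain ⟨d₁, d₂, μ₁, μ₂, hsd₁, hsd₂, hne⟩ := hd2
      obtain ⟨z₁, hz₁, hzb₁⟩ := vacc_lift hacc σ hsd₁
      obtain ⟨z₂, hz₂, hzb₂⟩ := vacc_lift hacc σ hsd₂
      have hzb₁' : Bisim z₁ (.par d₁ (ch a S')) :=
        bisim_trans hzb₁ (parFold_bisim (bisim_refl d₁) hL')
      have hzb₂' : Bisim z₂ (.par d₂ (ch a S')) :=
        bisim_trans hzb₂ (parFold_bisim (bisim_refl d₂) hL')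
      -- each lifted derivative is a chain
      have hchain : ∀ z μ, Step (subst σ v₁) μ z → μ = Act.name a ∧
          Bisim z (ch a (sdepth z)) := by
        intro z μ hz
        obtain ⟨hμ, hin⟩ := hBBnode μ (.par z (subst σ v₂)) (Step.parL hz)
        refine ⟨hμ, ?_⟩
        rcases hin with hin | ⟨i, hi1, hi2, hin⟩
        · exfalso
          have : Bisim (.par z (ch a (j'+1))) (Bt a n 0) :=
            bisim_trans (bisim_par (bisim_refl z) (bisim_symm hcj)) hin
          obtain ⟨hle, _⟩ := chain_cancel hn (j'+1) this
          omega
        · exact (par_chain_split hin).1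
      have hzc₁ := hchain z₁ μ₁ hz₁
      have hzc₂ := hchain z₂ μ₂ hz₂
      -- the two lifted derivatives are non-bisimilar
      have hzne : ¬ Bisim z₁ z₂ := by
        intro hb
        have e₁ : Bisim (.par d₁ (ch a S')) (ch a (sdepth z₁)) :=
          bisim_trans (bisim_symm hzb₁') hzc₁.2
        have e₂ : Bisim (.par d₂ (ch a S')) (ch a (sdepth z₂)) :=
          bisim_trans (bisim_symm hzb₂') hzc₂.2
        have f₁ := par_chain_split e₁
        have f₂ := par_chain_split e₂
        have hdepz : sdepth z₁ = sdepth z₂ := bisim_sdepth hb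
        have : sdepth d₁ = sdepth d₂ := by
          have := f₁.2.2; have := f₂.2.2
          simp [sdepth_ch] at *
          omega
        exact hne (bisim_trans f₁.1 (this ▸ bisim_symm f₂.1))
      -- the complement can die, revealing Bt 0
      obtain ⟨d', hd', hdb'⟩ := bisim_ch_realize hcj
      have hIstep : Step (.par (subst σ v₁) (subst σ v₂)) (Act.name a)
          (.par (subst σ v₁) d') := Step.parR hd'
      obtain ⟨_, hin⟩ := hBBnode _ _ hIstep
      rcases hin with hin | ⟨i, hi1, hi2, hin⟩
      swap
      · -- chain case: contradiction via the two distinct derivatives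
        exfalso
        have hIch : Bisim (subst σ v₁) (ch a (sdepth (subst σ v₁))) :=
          (par_chain_split hin).1
        exact hzne (chain_derivs_bisim hIch hz₁ hz₂)
      · -- Bt 0 case
        have hIco : Bisim (.par (subst σ v₁) (ch a j')) (Bt a n 0) :=
          bisim_trans (bisim_par (bisim_refl _) (bisim_symm hdb')) hin
        obtain ⟨hj'le, hI⟩ := chain_cancel hn j' hIco
        have hj'0 : j' = 0 := by omega
        subst hj'0
        -- node is ∼ Bt 1
        have hnodeB : Bisim (.par (subst σ v₁) (subst σ v₂)) (Bt a n 1) := by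
          refine bisim_Bt1_of_full hn hBBnode ⟨?_, ?_⟩
          · exact ⟨.par (subst σ v₁) d', hIstep, by simpa using hin⟩
          · intro i hi1 hi2
            obtain ⟨dd, hdd, hddb⟩ := bisim_Bt_realize_chain (j := i - 1) (l := 0)
              (by omega) hI
            refine ⟨.par dd (subst σ v₂), Step.parL hdd, ?_⟩
            have h1 : Bisim (.par dd (subst σ v₂)) (.par (ch a (i-1)) (ch a 1)) := by
              refine bisim_par ?_ hcj
              rwa [show i - 1 + 0 = i - 1 from by omega] at hddb
            refine bisim_trans h1 ?_
            have := bisim_ch_par_add a (i-1) 1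
            rwa [show i - 1 + 1 = i from by omega] at this
        refine ⟨subst σ (.par v₁ v₂), hnodesmd, hnodeB, Good.split ?_ ?_⟩
        · exact not_bisim_nil_of_step hz₁
        · intro hb
          obtain ⟨dd, hdd, _⟩ := bisim_ch_realize hcj
          exact bisim_nil_noStep hb _ _ hdd
  | @parR v v₁ v₂ L hsmd hacc ih =>
    rintro S ⟨j, S', hcj, hL', heq⟩ hS1 hBB
    have hnodesmd : Smd (subst σ (.par v₁ v₂)) (subst σ v) := smd_subst hsmd trivial
    have hBBnode : BasketBound a n (.par (subst σ v₁) (subst σ v₂)) := by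
      intro μ d hd
      exact hBB μ d (smd_step hnodesmd hd)
    cases j with
    | zero =>
      have hBB₂ : BasketBound a n (subst σ v₂) := by
        intro μ d hd
        obtain ⟨hμ, hin⟩ := hBBnode μ (.par (subst σ v₁) d) (Step.parR hd)
        exact ⟨hμ, inBasket_bisim (bisim_symm (bisim_par_nil_left hcj)) hin⟩
      obtain ⟨hB, hG⟩ := wrap_padR hn hBBnode hcj (ih S' hL' (by omega) hBB₂)
      exact ⟨subst σ (.par v₁ v₂), hnodesmd, hB, hG⟩
    | succ j' =>
      obtain ⟨d₁, d₂, μ₁, μ₂, hsd₁, hsd₂, hne⟩ := hd2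
      obtain ⟨z₁, hz₁, hzb₁⟩ := vacc_lift hacc σ hsd₁
      obtain ⟨z₂, hz₂, hzb₂⟩ := vacc_lift hacc σ hsd₂
      have hzb₁' : Bisim z₁ (.par d₁ (ch a S')) :=
        bisim_trans hzb₁ (parFold_bisim (bisim_refl d₁) hL')
      have hzb₂' : Bisim z₂ (.par d₂ (ch a S')) :=
        bisim_trans hzb₂ (parFold_bisim (bisim_refl d₂) hL')
      have hchain : ∀ z μ, Step (subst σ v₂) μ z → μ = Act.name a ∧
          Bisim z (ch a (sdepth z)) := by
        intro z μ hz
        obtain ⟨hμ, hin⟩ := hBBnode μ (.par (subst σ v₁) z) (Step.parR hz)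
        refine ⟨hμ, ?_⟩
        rcases hin with hin | ⟨i, hi1, hi2, hin⟩
        · exfalso
          have h0 : Bisim (.par z (ch a (j'+1))) (Bt a n 0) := by
            refine bisim_trans (bisim_par (bisim_refl z) (bisim_symm hcj)) ?_
            exact bisim_trans (bisim_par_comm z (subst σ v₁)) hin
          obtain ⟨hle, _⟩ := chain_cancel hn (j'+1) h0
          omega
        · exact (par_chain_split hin).2.1
      have hzc₁ := hchain z₁ μ₁ hz₁
      have hzc₂ := hchain z₂ μ₂ hz₂
      have hzne : ¬ Bisim z₁ z₂ := by
        intro hb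
        have e₁ : Bisim (.par d₁ (ch a S')) (ch a (sdepth z₁)) :=
          bisim_trans (bisim_symm hzb₁') hzc₁.2
        have e₂ : Bisim (.par d₂ (ch a S')) (ch a (sdepth z₂)) :=
          bisim_trans (bisim_symm hzb₂') hzc₂.2
        have f₁ := par_chain_split e₁
        have f₂ := par_chain_split e₂
        have hdepz : sdepth z₁ = sdepth z₂ := bisim_sdepth hb
        have : sdepth d₁ = sdepth d₂ := by
          have := f₁.2.2; have := f₂.2.2
          simp [sdepth_ch] at *
          omega
        exact hne (bisim_trans f₁.1 (this ▸ bisim_symm f₂.1))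
      obtain ⟨d', hd', hdb'⟩ := bisim_ch_realize hcj
      have hIstep : Step (.par (subst σ v₁) (subst σ v₂)) (Act.name a)
          (.par d' (subst σ v₂)) := Step.parL hd'
      obtain ⟨_, hin⟩ := hBBnode _ _ hIstep
      rcases hin with hin | ⟨i, hi1, hi2, hin⟩
      swap
      · exfalso
        have hIch : Bisim (subst σ v₂) (ch a (sdepth (subst σ v₂))) :=
          (par_chain_split hin).2.1
        exact hzne (chain_derivs_bisim hIch hz₁ hz₂)
      · have hIco : Bisim (.par (subst σ v₂) (ch a j')) (Bt a n 0) := by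
          refine bisim_trans (bisim_par (bisim_refl _) (bisim_symm hdb')) ?_
          exact bisim_trans (bisim_par_comm (subst σ v₂) d') hin
        obtain ⟨hj'le, hI⟩ := chain_cancel hn j' hIco
        have hj'0 : j' = 0 := by omega
        subst hj'0
        have hnodeB : Bisim (.par (subst σ v₁) (subst σ v₂)) (Bt a n 1) := by
          refine bisim_Bt1_of_full hn hBBnode ⟨?_, ?_⟩
          · exact ⟨.par d' (subst σ v₂), hIstep, by simpa using hin⟩
          · intro i hi1 hi2
            obtain ⟨dd, hdd, hddb⟩ := bisim_Bt_realize_chain (j := i - 1) (l := 0)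
              (by omega) hI
            refine ⟨.par (subst σ v₁) dd, Step.parR hdd, ?_⟩
            have h1 : Bisim (.par (subst σ v₁) dd) (.par (ch a 1) (ch a (i-1))) := by
              refine bisim_par hcj ?_
              rwa [show i - 1 + 0 = i - 1 from by omega] at hddb
            refine bisim_trans h1 ?_
            have := bisim_ch_par_add a 1 (i-1)
            rwa [show 1 + (i - 1) = i from by omega] at this
        refine ⟨subst σ (.par v₁ v₂), hnodesmd, hnodeB, Good.split ?_ ?_⟩
        · intro hb
          obtain ⟨dd, hdd, _⟩ := bisim_ch_realize hcj
          exact bisim_nil_noStep hb _ _ hdd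
        · exact not_bisim_nil_of_step hz₁

end Moller

namespace Moller
variable {A : Type}

lemma chvals_mem {a : A} {σ : ℕ → Tm A} : ∀ {L : List (Tm A)} {S : ℕ} {c : Tm A},
    ChVals a σ L S → c ∈ L → ∃ j, Bisim (subst σ c) (ch a j) := by
  intro L
  induction L with
  | nil => intro S c _ hc; simp at hc
  | cons c₀ L ih =>
    rintro S c ⟨j, S', hc₀, hL, rfl⟩ hc
    rcases List.mem_cons.mp hc with rfl | hc
    · exact ⟨j, hc₀⟩
    · exact ih hL hc

/-- The key lemma: the invariant property transfers across a sound small equation. -/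
lemma key_lemma {a : A} {n : ℕ} (hn : 2 ≤ n) {t u : Tm A}
    (hEq : EqnSound Bisim t u) (hszt : tsize t < n) (hszu : tsize u < n)
    {σ : ℕ → Tm A} (hσ : ClosedSubst σ)
    (hσt : Bisim (subst σ t) (Bt a n 1)) (hHP : HasP a n (subst σ t)) :
    HasP a n (subst σ u) := by
  obtain ⟨s, hsmd, hsB, hgood⟩ := hHP
  obtain ⟨y, Lt, St, hacc, hchv, hkind⟩ :=
    extract hn (tsize t) t σ (le_refl _) hszt hσt s hsmd hsB hgood
  have hd2 : ∃ d₁ d₂ μ₁ μ₂, Step (σ y) μ₁ d₁ ∧ Step (σ y) μ₂ d₂ ∧ ¬ Bisim d₁ d₂ := by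
    rcases hkind with ⟨_, hB, _⟩ | ⟨_, h⟩
    exacts [two_distinct_of_Bt1 hn hB, h]
  have hσu : Bisim (subst σ u) (Bt a n 1) :=
    bisim_trans (bisim_symm (hEq σ hσ)) hσt
  have hdepu : sdepth (subst σ u) ≤ n + 1 := by
    have := bisim_sdepth hσu; rw [sdepth_Bt] at this; omega
  set N := n + 2 + (n+1) * tsize u with hN
  set ρ := fun x => if x = y then Tm.plus (σ y) (ch a (N+1)) else σ x with hρ
  have hρc : ClosedSubst ρ := by
    intro x
    by_cases hx : x = y
    · show Closed (if x = y then Tm.plus (σ y) (ch a (N+1)) else σ x)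
      rw [if_pos hx]
      exact ⟨hσ y, closed_ch a _⟩
    · show Closed (if x = y then Tm.plus (σ y) (ch a (N+1)) else σ x)
      rw [if_neg hx]
      exact hσ x
  have hρy : ρ y = .plus (σ y) (ch a (N+1)) := by rw [hρ]; simp
  have hρx : ∀ x, x ≠ y → ρ x = σ x := by
    intro x hx; rw [hρ]; simp [hx]
  obtain ⟨d₁, d₂, μ₁, μ₂, hs₁, hs₂, hne⟩ := hd2
  have hynotin : ∀ c ∈ Lt, ¬ Occurs y c := by
    intro c hc hocc
    obtain ⟨j, hj⟩ := chvals_mem hchv hc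
    exact cec hs₁ hs₂ hne hocc hj
  have hprobe : Step (ρ y) (Act.name a) (ch a N) := by
    rw [hρy]; exact Step.plusR (step_ch a N)
  obtain ⟨z, hz, hzb⟩ := vacc_lift hacc ρ hprobe
  have hmapeq : Lt.map (subst ρ) = Lt.map (subst σ) := by
    apply List.map_congr_left
    intro c hc
    refine subst_agree (fun x hx => hρx x ?_)
    intro he
    exact hynotin c hc (he ▸ hx)
  rw [hmapeq] at hzb
  have hzch : Bisim z (ch a (N + St)) :=
    bisim_trans hzb (bisim_trans (parFold_bisim (bisim_refl _) hchv)
      (bisim_ch_par_add a N St))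
  have hρtu : Bisim (subst ρ t) (subst ρ u) := hEq ρ hρc
  obtain ⟨r, hr, hrb⟩ := bisim_step hρtu hz
  have hrch : Bisim r (ch a (N + St)) := bisim_trans (bisim_symm hrb) hzch
  obtain ⟨Lu, Su, haccu, hchvu, heq⟩ :=
    usl hρy hρx ⟨d₁, d₂, μ₁, μ₂, hs₁, hs₂, hne⟩ u (N + St) r hdepu hr hrch (by omega)
  have hSu : Su = St := by omega
  have hBBu : BasketBound a n (subst σ u) := basketBound_of_Bt1 hσu
  rcases hkind with ⟨hS0, hyB, hyHP⟩ | ⟨hS1, _⟩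
  · rw [hSu, hS0] at hchvu
    exact abuild hn haccu hchvu hBBu hyB hyHP
  · exact bbuild hn ⟨d₁, d₂, μ₁, μ₂, hs₁, hs₂, hne⟩ haccu Su hchvu (by omega) hBBu

end Moller

namespace Moller
variable {A : Type}

lemma eqnSound_symm {t u : Tm A} (h : EqnSound Bisim t u) : EqnSound Bisim u t :=
  fun σ hσ => bisim_symm (h σ hσ)

/-- The main invariant: `HasP` is preserved along derivations from a sound system
whose equations are small. -/
lemma invariant {a : A} {n : ℕ} (hn : 2 ≤ n) {E : Set (Eqn A)}
    (hE : SystemSound Bisim E)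
    (hsz : ∀ e ∈ E, tsize e.1 < n ∧ tsize e.2 < n) :
    ∀ {t u : Tm A}, Deriv E t u → ∀ σ, ClosedSubst σ →
      Bisim (subst σ t) (Bt a n 1) → (HasP a n (subst σ t) ↔ HasP a n (subst σ u)) := by
  intro t u h
  induction h with
  | @ax t' u' σ' he =>
    intro σ hσ hB
    have hτ : ClosedSubst (fun x => subst σ (σ' x)) := fun x => closed_subst hσ (σ' x)
    have hEq : EqnSound Bisim t' u' := hE (t', u') he
    have hs1 : tsize t' < n := (hsz (t', u') he).1
    have hs2 : tsize u' < n := (hsz (t', u') he).2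
    rw [subst_subst] at hB
    rw [subst_subst σ σ' t', subst_subst σ σ' u']
    constructor
    · intro hP
      exact key_lemma hn hEq hs1 hs2 hτ hB hP
    · intro hP
      have hB' : Bisim (subst (fun x => subst σ (σ' x)) u') (Bt a n 1) :=
        bisim_trans (bisim_symm (hEq _ hτ)) hB
      exact key_lemma hn (eqnSound_symm hEq) hs2 hs1 hτ hB' hP
  | refl t => intro σ hσ _; exact Iff.rfl
  | @symm t' u' h ih =>
    intro σ hσ hB
    have hB' : Bisim (subst σ t') (Bt a n 1) :=
      bisim_trans (deriv_sound hE h σ hσ) hB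
    exact (ih σ hσ hB').symm
  | @trans t' u' v' h1 h2 ih1 ih2 =>
    intro σ hσ hB
    have hBmid : Bisim (subst σ u') (Bt a n 1) :=
      bisim_trans (bisim_symm (deriv_sound hE h1 σ hσ)) hB
    exact (ih1 σ hσ hB).trans (ih2 σ hσ hBmid)
  | @pre μ t' u' h ih =>
    intro σ hσ hB
    exact absurd hB (not_bisim_pre_Bt1 hn)
  | @plus t₁ u₁ t₂ u₂ h1 h2 ih1 ih2 =>
    intro σ hσ hB
    have hsound : Bisim (subst σ (.plus t₁ t₂)) (subst σ (.plus u₁ u₂)) :=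
      deriv_sound hE (Deriv.plus h1 h2) σ hσ
    have hBu : Bisim (subst σ (.plus u₁ u₂)) (Bt a n 1) :=
      bisim_trans (bisim_symm hsound) hB
    have hsub₁ : ∀ μ d, Step (subst σ t₁) μ d → Step (subst σ (.plus t₁ t₂)) μ d :=
      fun μ d hd => Step.plusL hd
    have hsub₂ : ∀ μ d, Step (subst σ t₂) μ d → Step (subst σ (.plus t₁ t₂)) μ d :=
      fun μ d hd => Step.plusR hd
    have hsubu₁ : ∀ μ d, Step (subst σ u₁) μ d → Step (subst σ (.plus u₁ u₂)) μ d :=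
      fun μ d hd => Step.plusL hd
    have hsubu₂ : ∀ μ d, Step (subst σ u₂) μ d → Step (subst σ (.plus u₁ u₂)) μ d :=
      fun μ d hd => Step.plusR hd
    constructor
    · rintro ⟨s, hsmd, hsB, hgood⟩
      cases hsmd with
      | base h0 => exact absurd h0 id
      | pl hsmd =>
        have htB : Bisim (subst σ t₁) (Bt a n 1) := bisim_sandwich hsub₁ hB hsmd hsB
        exact hasP_plusL ((ih1 σ hσ htB).mp ⟨s, hsmd, hsB, hgood⟩)
      | pr hsmd =>
        have htB : Bisim (subst σ t₂) (Bt a n 1) := bisim_sandwich hsub₂ hB hsmd hsB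
        exact hasP_plusR ((ih2 σ hσ htB).mp ⟨s, hsmd, hsB, hgood⟩)
    · rintro ⟨s, hsmd, hsB, hgood⟩
      cases hsmd with
      | base h0 => exact absurd h0 id
      | pl hsmd =>
        have huB : Bisim (subst σ u₁) (Bt a n 1) := bisim_sandwich hsubu₁ hBu hsmd hsB
        have htB : Bisim (subst σ t₁) (Bt a n 1) :=
          bisim_trans (deriv_sound hE h1 σ hσ) huB
        exact hasP_plusL ((ih1 σ hσ htB).mpr ⟨s, hsmd, hsB, hgood⟩)
      | pr hsmd =>
        have huB : Bisim (subst σ u₂) (Bt a n 1) := bisim_sandwich hsubu₂ hBu hsmd hsB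
        have htB : Bisim (subst σ t₂) (Bt a n 1) :=
          bisim_trans (deriv_sound hE h2 σ hσ) huB
        exact hasP_plusR ((ih2 σ hσ htB).mpr ⟨s, hsmd, hsB, hgood⟩)
  | @par t₁ u₁ t₂ u₂ h1 h2 ih1 ih2 =>
    intro σ hσ hB
    have hu1 : Bisim (subst σ t₁) (subst σ u₁) := deriv_sound hE h1 σ hσ
    have hu2 : Bisim (subst σ t₂) (subst σ u₂) := deriv_sound hE h2 σ hσ
    have hpar : Bisim (subst σ (.par t₁ t₂)) (subst σ (.par u₁ u₂)) :=
      bisim_par hu1 hu2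
    have hBu : Bisim (subst σ (.par u₁ u₂)) (Bt a n 1) :=
      bisim_trans (bisim_symm hpar) hB
    constructor
    · rintro ⟨s, hsmd, hsB, hgood⟩
      cases hsmd with
      | base h0 =>
        cases hgood with
        | split hA hB' =>
          refine ⟨subst σ (.par u₁ u₂), Smd.base trivial, hBu, Good.split ?_ ?_⟩
          · intro hc; exact hA (bisim_trans hu1 hc)
          · intro hc; exact hB' (bisim_trans hu2 hc)
        | padL h2nil hsmd' hs'B hgood' =>
          have htB : Bisim (subst σ t₁) (Bt a n 1) := bisim_drop_nil_right hsB h2nil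
          obtain ⟨s'', hsmd'', hs''B, hgood''⟩ :=
            (ih1 σ hσ htB).mp ⟨_, hsmd', hs'B, hgood'⟩
          refine ⟨subst σ (.par u₁ u₂), Smd.base trivial, hBu,
            Good.padL (bisim_trans (bisim_symm hu2) h2nil) hsmd'' hs''B hgood''⟩
        | padR h1nil hsmd' hs'B hgood' =>
          have htB : Bisim (subst σ t₂) (Bt a n 1) := bisim_drop_nil_left hsB h1nil
          obtain ⟨s'', hsmd'', hs''B, hgood''⟩ :=
            (ih2 σ hσ htB).mp ⟨_, hsmd', hs'B, hgood'⟩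
          refine ⟨subst σ (.par u₁ u₂), Smd.base trivial, hBu,
            Good.padR (bisim_trans (bisim_symm hu1) h1nil) hsmd'' hs''B hgood''⟩
    · rintro ⟨s, hsmd, hsB, hgood⟩
      cases hsmd with
      | base h0 =>
        cases hgood with
        | split hA hB' =>
          refine ⟨subst σ (.par t₁ t₂), Smd.base trivial, hB, Good.split ?_ ?_⟩
          · intro hc; exact hA (bisim_trans (bisim_symm hu1) hc)
          · intro hc; exact hB' (bisim_trans (bisim_symm hu2) hc)
        | padL h2nil hsmd' hs'B hgood' =>
          have huB : Bisim (subst σ u₁) (Bt a n 1) := bisim_drop_nil_right hsB h2nil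
          have htB : Bisim (subst σ t₁) (Bt a n 1) := bisim_trans hu1 huB
          obtain ⟨s'', hsmd'', hs''B, hgood''⟩ :=
            (ih1 σ hσ htB).mpr ⟨_, hsmd', hs'B, hgood'⟩
          refine ⟨subst σ (.par t₁ t₂), Smd.base trivial, hB,
            Good.padL (bisim_trans hu2 h2nil) hsmd'' hs''B hgood''⟩
        | padR h1nil hsmd' hs'B hgood' =>
          have huB : Bisim (subst σ u₂) (Bt a n 1) := bisim_drop_nil_left hsB h1nil
          have htB : Bisim (subst σ t₂) (Bt a n 1) := bisim_trans hu2 huB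
          obtain ⟨s'', hsmd'', hs''B, hgood''⟩ :=
            (ih2 σ hσ htB).mpr ⟨_, hsmd', hs'B, hgood'⟩
          refine ⟨subst σ (.par t₁ t₂), Smd.base trivial, hB,
            Good.padR (bisim_trans hu1 h1nil) hsmd'' hs''B hgood''⟩

end Moller

namespace Moller
variable {A : Type}

def Qt (a : A) (n : ℕ) : Tm A :=
  .plus (sumF (fun i => .pre (Act.name a) (ch a i)) n) (.pre (Act.name a) (An a n))

lemma closed_Qt (a : A) (n : ℕ) : Closed (Qt a n) := by
  refine ⟨closed_sumF (fun i => ?_) n, ?_⟩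
  · exact closed_ch a i
  · exact closed_An a n

lemma bisim_Qt (a : A) {n : ℕ} (hn : 2 ≤ n) : Bisim (Bt a n 1) (Qt a n) := by
  refine bisim_symm (bisim_Bt1_of_full hn ?_ ⟨?_, ?_⟩)
  · intro μ d hd
    rcases step_plus_inv hd with hd | hd
    · obtain ⟨i, h1, h2, h3⟩ := step_sumF_inv hd
      obtain ⟨rfl, rfl⟩ := step_pre_inv h3
      exact ⟨rfl, Or.inr ⟨i, h1, h2, bisim_refl _⟩⟩
    · obtain ⟨rfl, rfl⟩ := step_pre_inv hd
      exact ⟨rfl, Or.inl (bisim_symm (bisim_par_nil (An a n)))⟩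
  · exact ⟨An a n, Step.plusR (Step.pre _ _), bisim_symm (bisim_par_nil (An a n))⟩
  · intro i h1 h2
    exact ⟨ch a i, Step.plusL (step_sumF h1 h2 (Step.pre _ _)), bisim_refl _⟩

lemma hasP_Bt1 (a : A) {n : ℕ} (hn : 2 ≤ n) : HasP a n (Bt a n 1) := by
  refine ⟨Bt a n 1, Smd.base trivial, bisim_refl _, Good.split ?_ ?_⟩
  · exact not_bisim_nil_of_step (step_An (show 0 < n by omega))
  · exact not_bisim_nil_of_step (step_ch a 0)

lemma smd_sumF_inv {g : ℕ → Tm A} : ∀ {m : ℕ} {s : Tm A}, 1 ≤ m → Smd s (sumF g m) →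
    ∃ i, 1 ≤ i ∧ i ≤ m ∧ Smd s (g i) := by
  intro m
  induction m with
  | zero => intro s h; omega
  | succ m ih =>
    intro s _ h
    cases m with
    | zero => exact ⟨1, le_refl _, le_refl _, h⟩
    | succ m' =>
      cases h with
      | base h0 => exact absurd h0 id
      | pl h =>
        obtain ⟨i, h1, h2, h3⟩ := ih (by omega) h
        exact ⟨i, h1, by omega, h3⟩
      | pr h => exact ⟨m' + 2, by omega, le_refl _, h⟩

lemma not_hasP_Qt (a : A) {n : ℕ} (hn : 2 ≤ n) : ¬ HasP a n (Qt a n) := by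
  rintro ⟨s, hsmd, hsB, hgood⟩
  cases hsmd with
  | base h0 => exact absurd h0 id
  | pl hsmd =>
    obtain ⟨i, h1, h2, hsmd'⟩ := smd_sumF_inv (by omega) hsmd
    cases hsmd' with
    | base _ => cases hgood
  | pr hsmd =>
    cases hsmd with
    | base _ => cases hgood

lemma exists_bound {E : Set (Eqn A)} (hE : E.Finite) :
    ∃ m, ∀ e ∈ E, tsize e.1 ≤ m ∧ tsize e.2 ≤ m := by
  obtain ⟨m, hm⟩ := (hE.image (fun e => max (tsize e.1) (tsize e.2))).bddAbove
  refine ⟨m, fun e he => ?_⟩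
  have := hm (Set.mem_image_of_mem _ he)
  exact ⟨le_trans (le_max_left _ _) this, le_trans (le_max_right _ _) this⟩

end Moller

theorem moller_final (A : Type) [Nonempty A] :
    ¬ ∃ E : Set (Eqn A), E.Finite ∧ SystemSound Bisim E ∧ GroundComplete Bisim E := by
  rintro ⟨E, hfin, hsound, hcomp⟩
  obtain ⟨a⟩ := ‹Nonempty A›
  obtain ⟨m, hm⟩ := Moller.exists_bound hfin
  have hn : 2 ≤ m + 2 := by omega
  have hsz : ∀ e ∈ E, Moller.tsize e.1 < m + 2 ∧ Moller.tsize e.2 < m + 2 := by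
    intro e he
    obtain ⟨h1, h2⟩ := hm e he
    omega
  have hPQ : Bisim (Moller.Bt a (m+2) 1) (Moller.Qt a (m+2)) := Moller.bisim_Qt a hn
  have hder : Deriv E (Moller.Bt a (m+2) 1) (Moller.Qt a (m+2)) :=
    hcomp _ _ (Moller.closed_Bt a (m+2) 1) (Moller.closed_Qt a (m+2)) hPQ
  have hσ : ClosedSubst (fun _ : ℕ => (Tm.nil : Tm A)) := fun _ => trivial
  have hbase : Bisim (subst (fun _ : ℕ => (Tm.nil : Tm A)) (Moller.Bt a (m+2) 1))
      (Moller.Bt a (m+2) 1) := by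
    rw [Moller.subst_closed (Moller.closed_Bt a (m+2) 1)]
    exact Moller.bisim_refl _
  have hiff := Moller.invariant (a := a) hn hsound hsz hder _ hσ hbase
  rw [Moller.subst_closed (Moller.closed_Bt a (m+2) 1),
    Moller.subst_closed (Moller.closed_Qt a (m+2))] at hiff
  exact Moller.not_hasP_Qt a hn (hiff.mp (Moller.hasP_Bt1 a hn))

/-- **Moller's theorem**: if the set `A` of action names is nonempty, then there is no
finite axiom system over CCS that is sound and ground-complete modulo bisimilarity. -/
theorem stmt_0 (A : Type) [Nonempty A] :
    ¬ ∃ E : Set (Eqn A), E.Finite ∧ SystemSound Bisim E ∧ GroundComplete Bisim E := by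
  exact moller_final A
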